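/- arXiv:1703.05968 — 4 statements merged into one kernel-verified Lean document; each statement's English description precedes it below -/
import Mathlib

section
/- Let k be a field and C a small k-linear category, and let Kar(C) be the Karoubi envelope of C (objects are pairs (x,e) with e : x → x an idempotent endomorphism; morphisms (x,e) → (y,e′) are morphisms f : x → y in C with f = e′∘f∘e). The k-linear map Tr ι : Tr C → Tr Kar(C) induced by the canonical embedding functor ι : C → Kar(C), x ↦ (x, 1_x), is bijective. -/
open CategoryTheory CategoryTheory.Limits CategoryTheory.Idempotents

attribute [local instance] Classical.propDecidable

noncomputable section

variable (k : Type) [Field k]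

section KaroubiLinear

variable {C : Type} [SmallCategory C] [Preadditive C] [CategoryTheory.Linear k C]

instance karoubiHomSMul (P Q : Karoubi C) : SMul k (P ⟶ Q) where
  smul c f := ⟨c • f.f, by
    rw [CategoryTheory.Linear.smul_comp, CategoryTheory.Linear.comp_smul, ← f.comm]
    simp⟩

@[simp] lemma karoubi_smul_f (P Q : Karoubi C) (c : k) (f : P ⟶ Q) :
    (c • f).f = c • f.f := rfl

instance karoubiHomModule (P Q : Karoubi C) : Module k (P ⟶ Q) :=
  Function.Injective.module k
    { toFun := fun (f : P ⟶ Q) => f.f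
      map_zero' := rfl
      map_add' := fun _ _ => rfl }
    (fun f g h => Karoubi.hom_ext _ _ h) (fun _ _ => rfl)

instance karoubiLinear : CategoryTheory.Linear k (Karoubi C) where
  homModule P Q := karoubiHomModule k P Q
  smul_comp P Q R c f g := by
    apply Karoubi.hom_ext
    simp [Karoubi.comp_f, CategoryTheory.Linear.smul_comp]
  comp_smul P Q R f c g := by
    apply Karoubi.hom_ext
    simp [Karoubi.comp_f, CategoryTheory.Linear.comp_smul]

end KaroubiLinear

open scoped DirectSum

/-- The subspace of `⊕_{x} End(x)` spanned by the commutators `f ∘ g − g ∘ f`. -/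
def traceRel (C : Type) [SmallCategory C] [Preadditive C] [CategoryTheory.Linear k C] :
    Submodule k (⨁ x : C, (x ⟶ x)) :=
  Submodule.span k
    {u | ∃ (x y : C) (f : x ⟶ y) (g : y ⟶ x),
      u = DirectSum.of (fun z : C => z ⟶ z) x (f ≫ g) -
            DirectSum.of (fun z : C => z ⟶ z) y (g ≫ f)}

/-- The trace of a `k`-linear category: `Tr C = (⊕_{x} End(x)) / span_k{f∘g − g∘f}`. -/
abbrev Tr (C : Type) [SmallCategory C] [Preadditive C] [CategoryTheory.Linear k C] :=
  (⨁ x : C, (x ⟶ x)) ⧸ traceRel k C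

/-- The trace class `[f] ∈ Tr C` of an endomorphism `f : x ⟶ x`. -/
def traceClass {C : Type} [SmallCategory C] [Preadditive C] [CategoryTheory.Linear k C]
    {x : C} (f : x ⟶ x) : Tr k C :=
  Submodule.Quotient.mk (DirectSum.of (fun z : C => z ⟶ z) x f)

section Aux

variable {D : Type} [SmallCategory D] [Preadditive D] [CategoryTheory.Linear k D]

lemma traceClass_comp_comm {x y : D} (f : x ⟶ y) (g : y ⟶ x) :
    traceClass k (f ≫ g) = traceClass k (g ≫ f) := by
  unfold traceClass
  rw [Submodule.Quotient.eq]
  exact Submodule.subset_span ⟨x, y, f, g, rfl⟩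

/-- The per-object linear map `End x → Tr D`, `f ↦ [f]`. -/
def traceClassₗ (x : D) : (x ⟶ x) →ₗ[k] Tr k D where
  toFun f := traceClass k f
  map_add' f g := by
    unfold traceClass
    rw [map_add, Submodule.Quotient.mk_add]
  map_smul' c f := by
    unfold traceClass
    rw [← DirectSum.lof_eq_of k D (fun z : D => z ⟶ z) x, map_smul,
      Submodule.Quotient.mk_smul]
    rfl

@[simp] lemma traceClassₗ_apply (x : D) (f : x ⟶ x) :
    traceClassₗ k x f = traceClass k f := rfl

lemma traceClass_eq_mk (x : D) (f : x ⟶ x) :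
    traceClass k f =
      Submodule.Quotient.mk (DirectSum.lof k D (fun z : D => z ⟶ z) x f) := by
  unfold traceClass
  rw [DirectSum.lof_eq_of]

end Aux

section Main

variable {C : Type} [SmallCategory C] [Preadditive C] [CategoryTheory.Linear k C]

/-- `f : x ⟶ x` in `C` to `[ι f] ∈ Tr Kar(C)`, linearly in `f`. -/
def toKarEnd (x : C) : (x ⟶ x) →ₗ[k] Tr k (Karoubi C) where
  toFun f := traceClass k ((toKaroubi C).map f)
  map_add' f g := by
    rw [Functor.map_add]
    exact (traceClassₗ k ((toKaroubi C).obj x)).map_add _ _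
  map_smul' c f := by
    have h : (toKaroubi C).map (c • f) = c • (toKaroubi C).map f :=
      Karoubi.hom_ext _ _ rfl
    rw [h]
    exact (traceClassₗ k ((toKaroubi C).obj x)).map_smul c _

/-- `f : P ⟶ P` in `Kar(C)` to `[f.f] ∈ Tr C`, linearly in `f`. -/
def fromKarEnd (P : Karoubi C) : (P ⟶ P) →ₗ[k] Tr k C where
  toFun f := traceClass k f.f
  map_add' f g := (traceClassₗ k P.X).map_add f.f g.f
  map_smul' c f := (traceClassₗ k P.X).map_smul c f.f

/-- The forward map on direct sums. -/
def Phi : (⨁ x : C, (x ⟶ x)) →ₗ[k] Tr k (Karoubi C) :=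
  DirectSum.toModule k C _ (toKarEnd k)

/-- The backward map on direct sums. -/
def Psi : (⨁ P : Karoubi C, (P ⟶ P)) →ₗ[k] Tr k C :=
  DirectSum.toModule k (Karoubi C) _ (fromKarEnd k)

lemma Phi_of (x : C) (f : x ⟶ x) :
    Phi k (DirectSum.of (fun z : C => z ⟶ z) x f)
      = traceClass k ((toKaroubi C).map f) := by
  rw [← DirectSum.lof_eq_of k C (fun z : C => z ⟶ z) x]
  unfold Phi
  exact DirectSum.toModule_lof (R := k) (N := Tr k (Karoubi C)) (φ := toKarEnd k) x f

lemma Psi_of (P : Karoubi C) (f : P ⟶ P) :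
    Psi k (DirectSum.of (fun Q : Karoubi C => Q ⟶ Q) P f) = traceClass k f.f := by
  rw [← DirectSum.lof_eq_of k (Karoubi C) (fun Q : Karoubi C => Q ⟶ Q) P]
  unfold Psi
  exact DirectSum.toModule_lof (R := k) (N := Tr k C) (φ := fromKarEnd k) P f

lemma Phi_ker : traceRel k C ≤ LinearMap.ker (Phi k) := by
  rw [traceRel, Submodule.span_le]
  rintro u ⟨x, y, f, g, rfl⟩
  rw [SetLike.mem_coe, LinearMap.mem_ker, map_sub, Phi_of, Phi_of,
    Functor.map_comp, Functor.map_comp, traceClass_comp_comm, sub_self]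

lemma Psi_ker : traceRel k (Karoubi C) ≤ LinearMap.ker (Psi k) := by
  rw [traceRel, Submodule.span_le]
  rintro u ⟨P, Q, f, g, rfl⟩
  rw [SetLike.mem_coe, LinearMap.mem_ker, map_sub, Psi_of, Psi_of,
    Karoubi.comp_f, Karoubi.comp_f, traceClass_comp_comm, sub_self]

/-- The induced map `Tr C → Tr Kar(C)`. -/
def Tmap : Tr k C →ₗ[k] Tr k (Karoubi C) :=
  Submodule.liftQ _ (Phi k) (Phi_ker k)

/-- The induced map `Tr Kar(C) → Tr C`. -/
def Smap : Tr k (Karoubi C) →ₗ[k] Tr k C :=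
  Submodule.liftQ _ (Psi k) (Psi_ker k)

lemma Tmap_traceClass (x : C) (f : x ⟶ x) :
    Tmap k (traceClass k f) = traceClass k ((toKaroubi C).map f) := by
  unfold traceClass Tmap
  rw [Submodule.liftQ_apply]
  exact Phi_of k x f

lemma Smap_traceClass (P : Karoubi C) (f : P ⟶ P) :
    Smap k (traceClass k f) = traceClass k f.f := by
  unfold traceClass Smap
  rw [Submodule.liftQ_apply]
  exact Psi_of k P f

/-- Key lemma: the class of `f : P ⟶ P` in `Tr Kar(C)` equals that of `ι f.f`. -/
lemma traceClass_karoubi (P : Karoubi C) (f : P ⟶ P) :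
    traceClass k f = traceClass k ((toKaroubi C).map f.f) := by
  let a : P ⟶ (toKaroubi C).obj P.X :=
    ⟨f.f, by dsimp [toKaroubi]; rw [Category.comp_id, Karoubi.p_comp]⟩
  let b : (toKaroubi C).obj P.X ⟶ P :=
    ⟨P.p, by dsimp [toKaroubi]; rw [Category.id_comp, P.idem]⟩
  have h1 : a ≫ b = f := Karoubi.hom_ext _ _ (by
    show f.f ≫ P.p = f.f
    exact Karoubi.comp_p f)
  have h2 : b ≫ a = (toKaroubi C).map f.f := Karoubi.hom_ext _ _ (by
    show P.p ≫ f.f = f.f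
    exact Karoubi.p_comp f)
  conv_lhs => rw [← h1]
  rw [traceClass_comp_comm, h2]

lemma ST_comp : (Smap k (C := C)).comp (Tmap k) = LinearMap.id := by
  apply Submodule.linearMap_qext
  apply DirectSum.linearMap_ext
  intro x
  ext f
  simp only [LinearMap.comp_apply, Submodule.mkQ_apply, LinearMap.id_apply]
  rw [← traceClass_eq_mk, Tmap_traceClass, Smap_traceClass]
  rfl

lemma TS_comp : (Tmap k (C := C)).comp (Smap k) = LinearMap.id := by
  apply Submodule.linearMap_qext
  apply DirectSum.linearMap_ext
  intro P
  ext f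
  simp only [LinearMap.comp_apply, Submodule.mkQ_apply, LinearMap.id_apply]
  rw [← traceClass_eq_mk, Smap_traceClass, Tmap_traceClass, ← traceClass_karoubi]

end Main

/-- The `k`-linear map `Tr ι : Tr C → Tr Kar(C)` induced by the canonical embedding
`ι : C ⥤ Kar(C)` (i.e. the unique linear map with `[f] ↦ [ι.map f]`) is bijective. -/
theorem trace_toKaroubi_bijective (C : Type) [SmallCategory C] [Preadditive C]
    [CategoryTheory.Linear k C] :
    ∃ T : Tr k C →ₗ[k] Tr k (Karoubi C),
      (∀ (x : C) (f : x ⟶ x), T (traceClass k f) = traceClass k ((toKaroubi C).map f)) ∧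
        Function.Bijective T := by
  refine ⟨Tmap k, Tmap_traceClass k, ?_⟩
  have h1 : ∀ t, Smap k (Tmap k (C := C) t) = t := fun t =>
    congrArg (fun φ : Tr k C →ₗ[k] Tr k C => φ t) (ST_comp k)
  have h2 : ∀ t, Tmap k (Smap k (C := C) t) = t := fun t =>
    congrArg (fun φ : Tr k (Karoubi C) →ₗ[k] Tr k (Karoubi C) => φ t) (TS_comp k)
  exact Function.bijective_iff_has_inverse.mpr ⟨Smap k, h1, h2⟩

end
end

section
/- Let λ_0 = (N, 0, …, 0). For every n-composition ν of N, the ideal I^{λ_0}_ν of P_ν (generated by the complete homogeneous symmetric polynomials h_r(Ω_{i_1} ∪ … ∪ Ω_{i_m}) for all 1 ≤ m ≤ n, all 1 ≤ i_1 < … < i_m ≤ n and all r > N − (ν_{i_1} + … + ν_{i_m})) equals the ideal of P_ν generated by the complete homogeneous symmetric polynomials h_r(X_1, …, X_N) in all N variables for all r > 0; equivalently, it equals the ideal of P_ν generated by all symmetric polynomials in X_1, …, X_N with zero constant term. -/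
open MvPolynomial Finset

noncomputable section

/-- The elementary symmetric polynomial of degree `l` in the variables indexed by `S`. -/
def esymIn {σ : Type*} [DecidableEq σ] (S : Finset σ) (l : ℕ) : MvPolynomial σ ℂ :=
  ∑ T ∈ S.powersetCard l, ∏ a ∈ T, X a

/-- The complete homogeneous symmetric polynomial of degree `m` in the variables indexed
by `S`. -/
def hsymIn {σ : Type*} [DecidableEq σ] (S : Finset σ) (m : ℕ) : MvPolynomial σ ℂ :=
  ∑ t ∈ S.sym m, (t.1.map X).prod

/-- Complete homogeneous symmetric polynomial with integer degree; zero in negative degree. -/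
def hsymZ {σ : Type*} [DecidableEq σ] (S : Finset σ) (d : ℤ) : MvPolynomial σ ℂ :=
  if 0 ≤ d then hsymIn S d.toNat else 0

/-- The power sum symmetric polynomial of degree `j` in the variables indexed by `S`. -/
def psymIn {σ : Type*} (S : Finset σ) (j : ℕ) : MvPolynomial σ ℂ :=
  ∑ a ∈ S, X a ^ j

variable (n N : ℕ)

/-- The partial sum `ν_0 + ⋯ + ν_{t−1}` of a composition `ν`. -/
def kpart (ν : Fin n → ℕ) (t : ℕ) : ℕ :=
  ∑ j ∈ Finset.univ.filter fun j : Fin n => (j : ℕ) < t, ν j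

/-- The `i`-th block of variables `Ω_i = {a | k_{i−1} ≤ a < k_i}` (0-based). -/
def blockOf (ν : Fin n → ℕ) (i : Fin n) : Finset (Fin N) :=
  Finset.univ.filter fun a : Fin N =>
    kpart n ν (i : ℕ) ≤ (a : ℕ) ∧ (a : ℕ) < kpart n ν ((i : ℕ) + 1)

/-- A permutation of the variables preserving each block of `ν`. -/
def BlockPreserving (ν : Fin n → ℕ) (σp : Equiv.Perm (Fin N)) : Prop :=
  ∀ i : Fin n, ∀ a ∈ blockOf n N ν i, σp a ∈ blockOf n N ν i

/-- `P_ν`: the subalgebra of polynomials invariant under the Young subgroup `S_ν`. -/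
def Psub (ν : Fin n → ℕ) : Subalgebra ℂ (MvPolynomial (Fin N) ℂ) where
  carrier := {p | ∀ σp : Equiv.Perm (Fin N), BlockPreserving n N ν σp → rename σp p = p}
  mul_mem' := fun hp hq σp hσ => by rw [map_mul, hp σp hσ, hq σp hσ]
  add_mem' := fun hp hq σp hσ => by rw [map_add, hp σp hσ, hq σp hσ]
  one_mem' := fun σp hσ => by simp
  zero_mem' := fun σp hσ => by simp
  algebraMap_mem' := fun c σp hσ => by simp [MvPolynomial.algebraMap_eq]

/-- The composition `ν − α_i` (for `i' = i+1`). -/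
def subAlpha (ν : Fin n → ℕ) (i i' : Fin n) : Fin n → ℕ :=
  Function.update (Function.update ν i (ν i - 1)) i' (ν i' + 1)

/-- The composition `ν + α_i` (for `i' = i+1`). -/
def addAlpha (ν : Fin n → ℕ) (i i' : Fin n) : Fin n → ℕ :=
  Function.update (Function.update ν i (ν i + 1)) i' (ν i' - 1)

/-- The variable `X_{k_i}` (the last variable of the `i`-th block), 0-based. -/
def varF [NeZero N] (ν : Fin n → ℕ) (i : Fin n) : Fin N :=
  Fin.ofNat N (kpart n ν ((i : ℕ) + 1) - 1 : ℕ)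

/-- The variable `X_{k_i + 1}` (the first variable of the `(i+1)`-st block), 0-based. -/
def varE [NeZero N] (ν : Fin n → ℕ) (i : Fin n) : Fin N :=
  Fin.ofNat N (kpart n ν ((i : ℕ) + 1) : ℕ)

/-- The value of `F_{i,j}` on the basis element `X_{k_i}^m`:
`Σ_{l=0}^{ν_i−1} (−1)^l e_l(ν−α_i;i) h_{m+j+ν_i−ν_{i+1}−1−l}(ν−α_i;i+1)`. -/
def Fval (ν : Fin n → ℕ) (i i' : Fin n) (j m : ℕ) : MvPolynomial (Fin N) ℂ :=
  ∑ l ∈ Finset.range (ν i),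
    (-1 : MvPolynomial (Fin N) ℂ) ^ l * esymIn (blockOf n N (subAlpha n ν i i') i) l *
      hsymZ (blockOf n N (subAlpha n ν i i') i')
        ((m : ℤ) + (j : ℤ) + (ν i : ℤ) - (ν i' : ℤ) - 1 - (l : ℤ))

/-- The value of `E_{i,j}` on the basis element `X_{k_i+1}^m`:
`Σ_{l=0}^{ν_{i+1}−1} (−1)^l e_l(ν+α_i;i+1) h_{m+j+ν_{i+1}−ν_i−1−l}(ν+α_i;i)`. -/
def Eval (ν : Fin n → ℕ) (i i' : Fin n) (j m : ℕ) : MvPolynomial (Fin N) ℂ :=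
  ∑ l ∈ Finset.range (ν i'),
    (-1 : MvPolynomial (Fin N) ℂ) ^ l * esymIn (blockOf n N (addAlpha n ν i i') i') l *
      hsymZ (blockOf n N (addAlpha n ν i i') i)
        ((m : ℤ) + (j : ℤ) + (ν i' : ℤ) - (ν i : ℤ) - 1 - (l : ℤ))

/-- `F` is (the restriction to `P_ν` of) the unique `P_{ν−α_i}`-linear map on
`P_{ν−α_i,ν}` sending the basis element `X_{k_i}^m` (`0 ≤ m ≤ ν_{i+1}`) to
`Σ_{l=0}^{ν_i−1} (−1)^l e_l(ν−α_i;i) h_{m+j+ν_i−ν_{i+1}−1−l}(ν−α_i;i+1)`;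
when `ν_i = 0` the target is the zero ring and `F` is the zero map. -/
def FSpec [NeZero N] (ν : Fin n → ℕ) (i i' : Fin n) (j : ℕ)
    (F : MvPolynomial (Fin N) ℂ → MvPolynomial (Fin N) ℂ) : Prop :=
  F 0 = 0 ∧
    (ν i = 0 → ∀ p ∈ Psub n N ν, F p = 0) ∧
    (0 < ν i → ∀ (p : MvPolynomial (Fin N) ℂ) (c : ℕ → MvPolynomial (Fin N) ℂ),
      p ∈ Psub n N ν → (∀ m, c m ∈ Psub n N (subAlpha n ν i i')) →
      p = ∑ m ∈ Finset.range (ν i' + 1), c m * X (varF n N ν i) ^ m →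
      F p = ∑ m ∈ Finset.range (ν i' + 1), c m * Fval n N ν i i' j m)

/-- `E` is (the restriction to `P_ν` of) the unique `P_{ν+α_i}`-linear map on
`P_{ν+α_i,ν}` sending the basis element `X_{k_i+1}^m` (`0 ≤ m ≤ ν_{i+1}−1`) to
`Σ_{l=0}^{ν_{i+1}−1} (−1)^l e_l(ν+α_i;i+1) h_{m+j+ν_{i+1}−ν_i−1−l}(ν+α_i;i)`;
when `ν_{i+1} = 0` the target is the zero ring and `E` is the zero map. -/
def ESpec [NeZero N] (ν : Fin n → ℕ) (i i' : Fin n) (j : ℕ)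
    (E : MvPolynomial (Fin N) ℂ → MvPolynomial (Fin N) ℂ) : Prop :=
  E 0 = 0 ∧
    (ν i' = 0 → ∀ p ∈ Psub n N ν, E p = 0) ∧
    (0 < ν i' → ∀ (p : MvPolynomial (Fin N) ℂ) (c : ℕ → MvPolynomial (Fin N) ℂ),
      p ∈ Psub n N ν → (∀ m, c m ∈ Psub n N (addAlpha n ν i i')) →
      p = ∑ m ∈ Finset.range (ν i'), c m * X (varE n N ν i) ^ m →
      E p = ∑ m ∈ Finset.range (ν i'), c m * Eval n N ν i i' j m)

/-- A family `(ν, i, j) ↦ F_{i,j} : P_ν → P_{ν−α_i}` of operators, each satisfying its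
defining specification (at every `n`-composition of `N`). -/
def FFam [NeZero N]
    (Ff : (Fin n → ℕ) → Fin n → ℕ → MvPolynomial (Fin N) ℂ → MvPolynomial (Fin N) ℂ) : Prop :=
  ∀ (ν : Fin n → ℕ) (i : Fin n) (hi : (i : ℕ) + 1 < n) (j : ℕ),
    Ff ν i j 0 = 0 ∧ ((∑ a, ν a) = N → FSpec n N ν i ⟨(i : ℕ) + 1, hi⟩ j (Ff ν i j))

/-- A family `(ν, i, j) ↦ E_{i,j} : P_ν → P_{ν+α_i}` of operators, each satisfying its
defining specification (at every `n`-composition of `N`). -/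
def EFam [NeZero N]
    (Ef : (Fin n → ℕ) → Fin n → ℕ → MvPolynomial (Fin N) ℂ → MvPolynomial (Fin N) ℂ) : Prop :=
  ∀ (ν : Fin n → ℕ) (i : Fin n) (hi : (i : ℕ) + 1 < n) (j : ℕ),
    Ef ν i j 0 = 0 ∧ ((∑ a, ν a) = N → ESpec n N ν i ⟨(i : ℕ) + 1, hi⟩ j (Ef ν i j))


namespace IlamAux

section Identities

variable {σ : Type*} [DecidableEq σ]

lemma hsymIn_zero (S : Finset σ) : hsymIn S 0 = 1 := by
  have : ((∅ : Sym σ 0) : Multiset σ) = 0 := rfl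
  simp [hsymIn, this]

lemma hsymIn_empty (m : ℕ) : hsymIn (∅ : Finset σ) (m+1) = 0 := by
  simp [hsymIn]

lemma esymIn_zero (S : Finset σ) : esymIn S 0 = 1 := by
  simp [esymIn]

lemma esymIn_eq_zero (S : Finset σ) {l : ℕ} (h : S.card < l) : esymIn S l = 0 := by
  simp [esymIn, Finset.powersetCard_eq_empty.2 h]

lemma sym_insert_decomp {x : σ} {A : Finset σ} (hx : x ∉ A) (m : ℕ) :
    (insert x A).sym (m+1) = A.sym (m+1) ∪ ((insert x A).sym m).image (Sym.cons x) := by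
  ext t
  simp only [mem_union, mem_image, mem_sym_iff]
  constructor
  · intro h
    by_cases hxt : x ∈ t
    · right
      refine ⟨t.erase x hxt, fun a ha => ?_, Sym.cons_erase hxt⟩
      have : a ∈ t := by
        have := Sym.cons_erase hxt
        rw [← this]
        exact Sym.mem_cons_of_mem ha
      exact mem_insert.2 ((mem_insert.1 (h a this)))
    · left
      intro a ha
      rcases mem_insert.1 (h a ha) with h1 | h1
      · exact absurd (h1 ▸ ha) hxt
      · exact h1
  · rintro (h | ⟨t', ht', rfl⟩)
    · exact fun a ha => mem_insert_of_mem (h a ha)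
    · intro a ha
      rcases Sym.mem_cons.1 ha with rfl | h1
      · exact mem_insert_self _ _
      · exact ht' a h1

lemma hsymIn_insert {x : σ} {A : Finset σ} (hx : x ∉ A) (m : ℕ) :
    hsymIn (insert x A) (m+1) = hsymIn A (m+1) + X x * hsymIn (insert x A) m := by
  rw [hsymIn, sym_insert_decomp hx, Finset.sum_union, Finset.sum_image]
  · congr 1
    rw [hsymIn, Finset.mul_sum]
    refine Finset.sum_congr rfl fun t ht => ?_
    show ((x ::ₘ t.1).map X).prod = X x * (t.1.map X).prod
    rw [Multiset.map_cons, Multiset.prod_cons]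
  · intro a _ b _ hab
    exact (Sym.cons_inj_right _ _ _).1 hab
  · rw [Finset.disjoint_left]
    rintro t ht ht'
    rcases Finset.mem_image.1 ht' with ⟨t', _, rfl⟩
    have : x ∈ A := (mem_sym_iff.1 ht) x (Sym.mem_cons_self _ _)
    exact hx this

lemma esymIn_insert {x : σ} {B : Finset σ} (hx : x ∉ B) (l : ℕ) :
    esymIn (insert x B) (l+1) = esymIn B (l+1) + X x * esymIn B l := by
  rw [esymIn, Finset.powersetCard_succ_insert hx, Finset.sum_union, Finset.sum_image]
  · congr 1
    rw [esymIn, Finset.mul_sum]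
    refine Finset.sum_congr rfl fun t ht => ?_
    have hxt : x ∉ t := fun hmem => hx ((Finset.mem_powersetCard.1 ht).1 hmem)
    rw [Finset.prod_insert hxt]
  · intro a ha b hb hab
    have hxa : x ∉ a := fun hmem => hx ((Finset.mem_powersetCard.1 ha).1 hmem)
    have hxb : x ∉ b := fun hmem => hx ((Finset.mem_powersetCard.1 hb).1 hmem)
    rw [← Finset.erase_insert hxa, ← Finset.erase_insert hxb, hab]
  · rw [Finset.disjoint_left]
    rintro t ht ht'
    rcases Finset.mem_image.1 ht' with ⟨t', _, rfl⟩
    exact hx ((Finset.mem_powersetCard.1 ht).1 (Finset.mem_insert_self _ _))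

lemma hsym_expand (B : Finset σ) : ∀ (A : Finset σ), Disjoint A B → ∀ r : ℕ,
    hsymIn A r = ∑ j ∈ Finset.range (r+1),
      (-1 : MvPolynomial σ ℂ)^j * esymIn B j * hsymIn (A ∪ B) (r - j) := by
  induction B using Finset.induction_on with
  | empty =>
    intro A _ r
    rw [Finset.sum_eq_single 0]
    · simp [esymIn_zero]
    · intro j hj hj0
      have hcard : (∅ : Finset σ).card < j := by
        rcases Nat.exists_eq_succ_of_ne_zero hj0 with ⟨k, rfl⟩
        simp
      rw [esymIn_eq_zero _ hcard, mul_zero, zero_mul]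
    · intro h
      exact absurd (Finset.mem_range.2 (by omega)) h
  | @insert x B' hx ih =>
    intro A hdisj r
    have hxA : x ∉ A := fun h =>
      Finset.disjoint_left.1 hdisj h (Finset.mem_insert_self x B')
    have hd1 : Disjoint (insert x A) B' := by
      rw [Finset.disjoint_left]
      intro a ha hab
      rcases Finset.mem_insert.1 ha with rfl | ha'
      · exact hx hab
      · exact Finset.disjoint_left.1 hdisj ha' (Finset.mem_insert_of_mem hab)
    have hU : insert x A ∪ B' = A ∪ insert x B' := by
      rw [Finset.insert_union, Finset.union_insert]
    rcases r with _ | m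
    · rw [Finset.sum_range_one]
      simp [hsymIn_zero, esymIn_zero]
    · have h1 := ih (insert x A) hd1 (m+1)
      have h2 := ih (insert x A) hd1 m
      rw [hU] at h1 h2
      have hrec := hsymIn_insert hxA m
      set G : ℕ → MvPolynomial σ ℂ := fun j =>
        (-1 : MvPolynomial σ ℂ)^j * esymIn (insert x B') j * hsymIn (A ∪ insert x B') (m+1-j)
        with hG
      set G1 : ℕ → MvPolynomial σ ℂ := fun j =>
        (-1 : MvPolynomial σ ℂ)^j * esymIn B' j * hsymIn (A ∪ insert x B') (m+1-j)
        with hG1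
      set g : ℕ → MvPolynomial σ ℂ := fun j =>
        (-1 : MvPolynomial σ ℂ)^j * esymIn B' j * hsymIn (A ∪ insert x B') (m-j)
        with hg
      have hEq1 : ∑ j ∈ Finset.range (m+1+1), G j
          = (∑ j ∈ Finset.range (m+1+1), G1 j)
            + (-(X x)) * ∑ j ∈ Finset.range (m+1), g j := by
        calc ∑ j ∈ Finset.range (m+1+1), G j
            = (∑ j ∈ Finset.range (m+1), G (j+1)) + G 0 := Finset.sum_range_succ' G (m+1)
          _ = (∑ j ∈ Finset.range (m+1), (G1 (j+1) + (-(X x)) * g j)) + G 0 := by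
              refine congrArg (fun z => z + G 0) (Finset.sum_congr rfl fun j hj => ?_)
              rw [hG, hG1, hg]
              simp only []
              rw [esymIn_insert hx j, Nat.succ_sub_succ]
              ring
          _ = ((∑ j ∈ Finset.range (m+1), G1 (j+1)) + G1 0)
              + (-(X x)) * ∑ j ∈ Finset.range (m+1), g j := by
              rw [Finset.sum_add_distrib, ← Finset.mul_sum]
              have hG00 : G 0 = G1 0 := by
                rw [hG, hG1]; simp only []; rw [esymIn_zero, esymIn_zero]
              rw [hG00]; ring
          _ = _ := by rw [← Finset.sum_range_succ' G1 (m+1)]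
      rw [hEq1, ← h1, ← h2, hrec]
      ring

lemma rename_esymIn (e : Equiv.Perm σ) (S : Finset σ) (l : ℕ) :
    rename e (esymIn S l) = esymIn (S.image e) l := by
  rw [esymIn, esymIn, map_sum]
  refine Finset.sum_nbij' (i := fun t => t.image e) (j := fun t => t.image e.symm)
    ?_ ?_ ?_ ?_ ?_
  · intro t ht
    rcases Finset.mem_powersetCard.1 ht with ⟨hsub, hcard⟩
    exact Finset.mem_powersetCard.2 ⟨Finset.image_subset_image hsub,
      by rw [Finset.card_image_of_injective _ e.injective, hcard]⟩
  · intro t ht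
    rcases Finset.mem_powersetCard.1 ht with ⟨hsub, hcard⟩
    refine Finset.mem_powersetCard.2 ⟨?_,
      by rw [Finset.card_image_of_injective _ e.symm.injective, hcard]⟩
    intro a ha
    rcases Finset.mem_image.1 ha with ⟨b, hb, rfl⟩
    rcases Finset.mem_image.1 (hsub hb) with ⟨c, hc, rfl⟩
    rwa [Equiv.symm_apply_apply]
  · intro t _
    rw [Finset.image_image]
    simp [Finset.image_id']
  · intro t _
    rw [Finset.image_image]
    simp [Finset.image_id']
  · intro t _
    rw [map_prod, Finset.prod_image (fun a _ b _ h => e.injective h)]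
    simp [rename_X]

lemma rename_hsymIn (e : Equiv.Perm σ) (S : Finset σ) (m : ℕ) :
    rename e (hsymIn S m) = hsymIn (S.image e) m := by
  rw [hsymIn, hsymIn, map_sum]
  refine Finset.sum_nbij' (i := fun t => t.map e) (j := fun t => t.map e.symm)
    ?_ ?_ ?_ ?_ ?_
  · intro t ht
    refine Finset.mem_sym_iff.2 fun a ha => ?_
    rcases Sym.mem_map.1 ha with ⟨b, hb, rfl⟩
    exact Finset.mem_image_of_mem _ (Finset.mem_sym_iff.1 ht b hb)
  · intro t ht
    refine Finset.mem_sym_iff.2 fun a ha => ?_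
    rcases Sym.mem_map.1 ha with ⟨b, hb, rfl⟩
    rcases Finset.mem_image.1 (Finset.mem_sym_iff.1 ht b hb) with ⟨c, hc, rfl⟩
    rwa [Equiv.symm_apply_apply]
  · intro t _
    rw [Sym.map_map]
    simp [Equiv.symm_comp_self, Sym.map_id']
  · intro t _
    rw [Sym.map_map]
    simp [Equiv.self_comp_symm, Sym.map_id']
  · intro t _
    show rename e ((t.1.map X).prod) = ((Sym.map e t).1.map X).prod
    have h1 : (Sym.map e t).1 = t.1.map e := rfl
    rw [h1, Multiset.map_map]
    rw [map_multiset_prod (rename (R := ℂ) e) (t.1.map X), Multiset.map_map]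
    refine congrArg Multiset.prod (Multiset.map_congr rfl fun a _ => ?_)
    simp [rename_X]

lemma image_eq_self_of_maps {S : Finset σ} {e : Equiv.Perm σ}
    (h : ∀ a ∈ S, e a ∈ S) : S.image e = S := by
  apply Finset.eq_of_subset_of_card_le
  · intro a ha
    rcases Finset.mem_image.1 ha with ⟨b, hb, rfl⟩
    exact h b hb
  · rw [Finset.card_image_of_injective _ e.injective]

lemma constantCoeff_hsymIn (S : Finset σ) {r : ℕ} (hr : 0 < r) :
    constantCoeff (hsymIn S r) = 0 := by
  rw [hsymIn, map_sum]
  refine Finset.sum_eq_zero fun t _ => ?_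
  rw [map_multiset_prod (constantCoeff (σ := σ) (R := ℂ)) (t.1.map X), Multiset.map_map]
  have h1 : t.1.map ((constantCoeff (σ := σ) (R := ℂ)) ∘ X) = Multiset.replicate r 0 := by
    have : ∀ a ∈ t.1, ((constantCoeff (σ := σ) (R := ℂ)) ∘ X) a = (fun _ => (0:ℂ)) a := by
      intro a _; simp [constantCoeff_X]
    rw [Multiset.map_congr rfl this, Multiset.map_const']
    congr 1
    exact t.2
  rw [h1, Multiset.prod_replicate, zero_pow hr.ne']

end Identities

section Blocks

variable {n N : ℕ}

lemma kpart_mono (ν : Fin n → ℕ) {t t' : ℕ} (h : t ≤ t') : kpart n ν t ≤ kpart n ν t' := by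
  apply Finset.sum_le_sum_of_subset
  intro j hj
  simp only [Finset.mem_filter, Finset.mem_univ, true_and] at hj ⊢
  omega

lemma kpart_succ (ν : Fin n → ℕ) (i : Fin n) :
    kpart n ν ((i : ℕ) + 1) = kpart n ν (i : ℕ) + ν i := by
  unfold kpart
  have heq : (Finset.univ.filter fun j : Fin n => (j:ℕ) < (i:ℕ)+1)
      = insert i (Finset.univ.filter fun j : Fin n => (j:ℕ) < (i:ℕ)) := by
    ext j
    simp only [Finset.mem_filter, Finset.mem_insert, Finset.mem_univ, true_and, Fin.ext_iff]
    omega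
  rw [heq, Finset.sum_insert (by simp)]
  omega

lemma kpart_n (ν : Fin n → ℕ) (hν : (∑ a, ν a) = N) : kpart n ν n = N := by
  unfold kpart
  rw [← hν]
  apply Finset.sum_congr _ (fun _ _ => rfl)
  ext j
  simp [j.isLt]

lemma blockOf_card (ν : Fin n → ℕ) (hν : (∑ a, ν a) = N) (i : Fin n) :
    (blockOf n N ν i).card = ν i := by
  have h2 : kpart n ν ((i:ℕ)+1) = kpart n ν (i:ℕ) + ν i := kpart_succ ν i
  have h3 : kpart n ν ((i:ℕ)+1) ≤ N := by
    rw [← kpart_n ν hν]; exact kpart_mono ν i.isLt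
  rw [blockOf]
  rw [Finset.card_nbij (t := Finset.Ico (kpart n ν (i:ℕ)) (kpart n ν ((i:ℕ)+1)))
    (i := fun a : Fin N => (a:ℕ)) ?_ ?_ ?_]
  · rw [Nat.card_Ico]; omega
  · intro a ha
    simp only [Finset.coe_filter, Finset.mem_filter, Finset.mem_univ, true_and, Set.mem_setOf_eq] at ha
    simp only [Finset.coe_Ico, Set.mem_Ico, Finset.mem_Ico]
    omega
  · intro a _ b _ hab
    exact Fin.ext hab
  · intro b hb
    simp only [Finset.coe_Ico, Set.mem_Ico] at hb
    have hbN : b < N := lt_of_lt_of_le hb.2 h3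
    refine ⟨⟨b, hbN⟩, ?_, rfl⟩
    simp only [Finset.coe_filter, Set.mem_setOf_eq, Finset.mem_univ, true_and]
    exact ⟨hb.1, hb.2⟩

lemma blockOf_eq_of_mem (ν : Fin n → ℕ) {i i' : Fin n} {a : Fin N}
    (h : a ∈ blockOf n N ν i) (h' : a ∈ blockOf n N ν i') : i = i' := by
  simp only [blockOf, Finset.mem_filter, Finset.mem_univ, true_and] at h h'
  rcases lt_trichotomy ((i:ℕ)) ((i':ℕ)) with hlt | heq | hgt
  · have := kpart_mono ν (show (i:ℕ)+1 ≤ (i':ℕ) from hlt)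
    omega
  · exact Fin.ext heq
  · have := kpart_mono ν (show (i':ℕ)+1 ≤ (i:ℕ) from hgt)
    omega

lemma blockOf_cover (ν : Fin n → ℕ) (hν : (∑ a, ν a) = N) (a : Fin N) :
    ∃ i : Fin n, a ∈ blockOf n N ν i := by
  classical
  have hPn : (a:ℕ) < kpart n ν n := by rw [kpart_n ν hν]; exact a.isLt
  have hex : ∃ t, (a:ℕ) < kpart n ν t := ⟨n, hPn⟩
  have ht : (a:ℕ) < kpart n ν (Nat.find hex) := Nat.find_spec hex
  have ht0 : Nat.find hex ≠ 0 := by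
    intro h0
    rw [h0] at ht
    have : kpart n ν 0 = 0 := by
      unfold kpart
      apply Finset.sum_eq_zero
      intro j hj
      simp at hj
    omega
  have htn : Nat.find hex ≤ n := Nat.find_min' hex hPn
  rcases Nat.exists_eq_succ_of_ne_zero ht0 with ⟨s, hts⟩
  have hs : ¬ ((a:ℕ) < kpart n ν s) := Nat.find_min hex (by omega)
  have hsn : s < n := by omega
  refine ⟨⟨s, hsn⟩, ?_⟩
  simp only [blockOf, Finset.mem_filter, Finset.mem_univ, true_and]
  rw [hts] at ht
  exact ⟨by omega, ht⟩

lemma biUnion_blocks_card (ν : Fin n → ℕ) (hν : (∑ a, ν a) = N) (T : Finset (Fin n)) :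
    ((T.biUnion fun a => blockOf n N ν a).card) = ∑ a ∈ T, ν a := by
  rw [Finset.card_biUnion]
  · exact Finset.sum_congr rfl fun i _ => blockOf_card ν hν i
  · intro i _ i' _ hne
    rw [Function.onFun, Finset.disjoint_left]
    intro a ha ha'
    exact hne (blockOf_eq_of_mem ν ha ha')

lemma biUnion_blocks_compl (ν : Fin n → ℕ) (hν : (∑ a, ν a) = N) (T : Finset (Fin n)) :
    (T.biUnion fun a => blockOf n N ν a)ᶜ = Tᶜ.biUnion fun a => blockOf n N ν a := by
  ext a
  rcases blockOf_cover ν hν a with ⟨i0, hi0⟩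
  simp only [Finset.mem_compl, Finset.mem_biUnion]
  constructor
  · intro h
    exact ⟨i0, fun hmem => h ⟨i0, hmem, hi0⟩, hi0⟩
  · rintro ⟨i, hic, hai⟩ ⟨i', hi'T, hai'⟩
    exact hic ((blockOf_eq_of_mem ν hai hai') ▸ hi'T)

lemma biUnion_blocks_univ (ν : Fin n → ℕ) (hν : (∑ a, ν a) = N) :
    ((Finset.univ : Finset (Fin n)).biUnion fun a => blockOf n N ν a)
      = (Finset.univ : Finset (Fin N)) := by
  refine Finset.eq_univ_of_forall fun a => ?_
  rcases blockOf_cover ν hν a with ⟨i, hi⟩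
  exact Finset.mem_biUnion.2 ⟨i, Finset.mem_univ i, hi⟩

lemma esymIn_biUnion_mem_Psub (ν : Fin n → ℕ) (T : Finset (Fin n)) (l : ℕ) :
    esymIn (T.biUnion fun a => blockOf n N ν a) l ∈ Psub n N ν := by
  intro σp hσ
  rw [rename_esymIn σp _ l, image_eq_self_of_maps]
  intro a ha
  rcases Finset.mem_biUnion.1 ha with ⟨i, hiT, hai⟩
  exact Finset.mem_biUnion.2 ⟨i, hiT, hσ i a hai⟩

lemma esymIn_univ_mem_Psub (ν : Fin n → ℕ) (l : ℕ) :
    esymIn (Finset.univ : Finset (Fin N)) l ∈ Psub n N ν := by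
  intro σp hσ
  rw [rename_esymIn σp _ l, image_eq_self_of_maps fun a _ => Finset.mem_univ _]

lemma hsymIn_univ_symm (r : ℕ) (σp : Equiv.Perm (Fin N)) :
    rename σp (hsymIn (Finset.univ : Finset (Fin N)) r)
      = hsymIn (Finset.univ : Finset (Fin N)) r := by
  rw [rename_hsymIn σp _ r, image_eq_self_of_maps fun a _ => Finset.mem_univ _]

lemma isSymmetric_mem_Psub (ν : Fin n → ℕ) {p : MvPolynomial (Fin N) ℂ}
    (h : MvPolynomial.IsSymmetric p) : p ∈ Psub n N ν := fun σp _ => h σp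

end Blocks

end IlamAux


/-- The generators `h_r(Ω_{i_1} ∪ … ∪ Ω_{i_m})`, for `1 ≤ i_1 < … < i_m ≤ n` and
`r > λ_1 + … + λ_m − ν_{i_1} − … − ν_{i_m}`, of the ideal `I^λ_ν ⊆ P_ν`. -/
def Igen (lam ν : Fin n → ℕ) : Set (MvPolynomial (Fin N) ℂ) :=
  {q | ∃ (T : Finset (Fin n)) (r : ℕ), T.Nonempty ∧
    (∑ k ∈ Finset.univ.filter fun k : Fin n => (k : ℕ) < T.card, lam k) < r + ∑ a ∈ T, ν a ∧
    q = hsymIn (T.biUnion fun a => blockOf n N ν a) r}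

/-- The ideal `I^λ_ν` of `P_ν`, realized as the `P_ν`-submodule of the ambient polynomial
ring spanned by its generators. -/
def Ilam (lam ν : Fin n → ℕ) : Submodule (Psub n N ν) (MvPolynomial (Fin N) ℂ) :=
  Submodule.span (Psub n N ν) (Igen n N lam ν)

/-- For `λ_0 = (N, 0, …, 0)`, the ideal `I^{λ_0}_ν` of `P_ν` equals the ideal generated by
the complete homogeneous symmetric polynomials `h_r(X_1,…,X_N)` for all `r > 0`;
equivalently, it equals the ideal generated by all symmetric polynomials in `X_1,…,X_N`
with zero constant term. -/
theorem Ilam_top_eq [NeZero N] (hn : 2 ≤ n) (hN : 1 ≤ N)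
    (ν : Fin n → ℕ) (hν : (∑ a, ν a) = N) :
    Ilam n N (fun a => if (a : ℕ) = 0 then N else 0) ν =
        Submodule.span (Psub n N ν)
          {q : MvPolynomial (Fin N) ℂ |
            ∃ r : ℕ, 0 < r ∧ q = hsymIn (Finset.univ : Finset (Fin N)) r} ∧
      Ilam n N (fun a => if (a : ℕ) = 0 then N else 0) ν =
        Submodule.span (Psub n N ν)
          {q : MvPolynomial (Fin N) ℂ |
            (∀ σp : Equiv.Perm (Fin N), rename σp q = q) ∧ constantCoeff q = 0} := by
  classical
  have h0n : 0 < n := by omega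
  set M1 : Submodule (Psub n N ν) (MvPolynomial (Fin N) ℂ) :=
    Submodule.span (Psub n N ν)
      {q : MvPolynomial (Fin N) ℂ |
        ∃ r : ℕ, 0 < r ∧ q = hsymIn (Finset.univ : Finset (Fin N)) r} with hM1
  have hlamsum : ∀ T : Finset (Fin n), T.Nonempty →
      (∑ k ∈ Finset.univ.filter fun k : Fin n => (k : ℕ) < T.card,
        (fun a : Fin n => if (a : ℕ) = 0 then N else 0) k) = N := by
    intro T hTne
    rw [Finset.sum_eq_single (⟨0, h0n⟩ : Fin n)]
    · simp
    · intro k _ hkne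
      have hk0 : (k : ℕ) ≠ 0 := fun h => hkne (Fin.ext h)
      simp [hk0]
    · intro hmem
      refine absurd (Finset.mem_filter.2 ⟨Finset.mem_univ _, ?_⟩) hmem
      simpa using Finset.card_pos.2 hTne
  have h1le : Ilam n N (fun a => if (a : ℕ) = 0 then N else 0) ν ≤ M1 := by
    apply Submodule.span_le.2
    rintro q ⟨T, r, hTne, hlt, rfl⟩
    rw [hlamsum T hTne] at hlt
    have hTle : ∑ a ∈ T, ν a ≤ N := by
      rw [← hν]; exact Finset.sum_le_sum_of_subset (Finset.subset_univ T)
    have hcS : (T.biUnion fun a => blockOf n N ν a).card = ∑ a ∈ T, ν a :=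
      IlamAux.biUnion_blocks_card ν hν T
    have hcSc : ((T.biUnion fun a => blockOf n N ν a)ᶜ).card < r := by
      rw [Finset.card_compl, Fintype.card_fin, hcS]; omega
    have hexp := IlamAux.hsym_expand ((T.biUnion fun a => blockOf n N ν a)ᶜ)
      (T.biUnion fun a => blockOf n N ν a) disjoint_compl_right r
    rw [Finset.union_compl] at hexp
    rw [hexp]
    apply Submodule.sum_mem
    intro j hj
    rcases Nat.lt_or_ge ((T.biUnion fun a => blockOf n N ν a)ᶜ).card j with hjc | hjc
    · rw [IlamAux.esymIn_eq_zero _ hjc, mul_zero, zero_mul]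
      exact Submodule.zero_mem _
    · have hrj : 0 < r - j := by omega
      have hco : (-1 : MvPolynomial (Fin N) ℂ) ^ j *
          esymIn ((T.biUnion fun a => blockOf n N ν a)ᶜ) j ∈ Psub n N ν := by
        rw [IlamAux.biUnion_blocks_compl ν hν T]
        exact mul_mem (pow_mem (neg_mem (one_mem _)) j)
          (IlamAux.esymIn_biUnion_mem_Psub ν Tᶜ j)
      have hmem := Submodule.smul_mem M1 (⟨_, hco⟩ : Psub n N ν)
        (Submodule.subset_span (⟨r - j, hrj, rfl⟩ :
          hsymIn (Finset.univ : Finset (Fin N)) (r - j) ∈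
            {q : MvPolynomial (Fin N) ℂ |
              ∃ r : ℕ, 0 < r ∧ q = hsymIn (Finset.univ : Finset (Fin N)) r}))
      exact hmem
  have h1ge : M1 ≤ Ilam n N (fun a => if (a : ℕ) = 0 then N else 0) ν := by
    rw [hM1]
    apply Submodule.span_le.2
    rintro q ⟨r, hr, rfl⟩
    apply Submodule.subset_span
    have hUne : (Finset.univ : Finset (Fin n)).Nonempty := ⟨⟨0, h0n⟩, Finset.mem_univ _⟩
    refine ⟨Finset.univ, r, hUne, ?_, ?_⟩
    · rw [hlamsum Finset.univ hUne, hν]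
      omega
    · rw [IlamAux.biUnion_blocks_univ ν hν]
  have h1 : Ilam n N (fun a => if (a : ℕ) = 0 then N else 0) ν = M1 :=
    le_antisymm h1le h1ge
  have hconst0 : ∀ p ∈ M1, constantCoeff p = 0 := by
    intro p hp
    refine Submodule.span_induction ?_ ?_ ?_ ?_ hp
    · rintro x ⟨r, hr, rfl⟩
      exact IlamAux.constantCoeff_hsymIn _ hr
    · exact map_zero _
    · intro x y _ _ hx hy
      rw [map_add, hx, hy, add_zero]
    · intro a x _ hx
      have hax : a • x = (a : MvPolynomial (Fin N) ℂ) * x := rfl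
      rw [hax, map_mul, hx, mul_zero]
  have hesymmMem : ∀ k : ℕ, 0 < k →
      esymIn (Finset.univ : Finset (Fin N)) k ∈ M1 := by
    intro k hk
    have hid := IlamAux.hsym_expand (Finset.univ : Finset (Fin N)) ∅
      (disjoint_bot_left) k
    rw [Finset.empty_union] at hid
    obtain ⟨k', rfl⟩ := Nat.exists_eq_succ_of_ne_zero hk.ne'
    rw [IlamAux.hsymIn_empty, Finset.sum_range_succ, Nat.sub_self, IlamAux.hsymIn_zero,
      mul_one] at hid
    set S := ∑ j ∈ Finset.range (k' + 1),
      (-1 : MvPolynomial (Fin N) ℂ) ^ j * esymIn (Finset.univ : Finset (Fin N)) j *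
        hsymIn (Finset.univ : Finset (Fin N)) (k' + 1 - j) with hSdef
    have hsq : (-1 : MvPolynomial (Fin N) ℂ) ^ (k' + 1) * (-1) ^ (k' + 1) = 1 := by
      rw [← mul_pow]; simp
    have h2 : (-1 : MvPolynomial (Fin N) ℂ) ^ (k' + 1) *
        esymIn (Finset.univ : Finset (Fin N)) (k' + 1) = -S := by
      linear_combination -hid
    have h3 : esymIn (Finset.univ : Finset (Fin N)) (k' + 1)
        = (-1 : MvPolynomial (Fin N) ℂ) ^ (k' + 1) * (-S) := by
      calc esymIn (Finset.univ : Finset (Fin N)) (k' + 1)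
          = ((-1 : MvPolynomial (Fin N) ℂ) ^ (k' + 1) * (-1) ^ (k' + 1)) *
            esymIn (Finset.univ : Finset (Fin N)) (k' + 1) := by rw [hsq, one_mul]
        _ = (-1 : MvPolynomial (Fin N) ℂ) ^ (k' + 1) * ((-1) ^ (k' + 1) *
            esymIn (Finset.univ : Finset (Fin N)) (k' + 1)) := by ring
        _ = _ := by rw [h2]
    have h4 : (-1 : MvPolynomial (Fin N) ℂ) ^ (k' + 1) * (-S)
        = ∑ j ∈ Finset.range (k' + 1),
            ((-1 : MvPolynomial (Fin N) ℂ) ^ (k' + 1) *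
              -((-1 : MvPolynomial (Fin N) ℂ) ^ j * esymIn (Finset.univ : Finset (Fin N)) j)) *
              hsymIn (Finset.univ : Finset (Fin N)) (k' + 1 - j) := by
      rw [hSdef, ← Finset.sum_neg_distrib, Finset.mul_sum]
      exact Finset.sum_congr rfl fun j _ => by ring
    rw [h3, h4]
    apply Submodule.sum_mem
    intro j hj
    have hjk : 0 < k' + 1 - j := by
      have := Finset.mem_range.1 hj; omega
    have hcm : (-1 : MvPolynomial (Fin N) ℂ) ^ (k' + 1) *
        -((-1 : MvPolynomial (Fin N) ℂ) ^ j * esymIn (Finset.univ : Finset (Fin N)) j)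
          ∈ Psub n N ν :=
      mul_mem (pow_mem (neg_mem (one_mem _)) _)
        (neg_mem (mul_mem (pow_mem (neg_mem (one_mem _)) _)
          (IlamAux.esymIn_univ_mem_Psub ν j)))
    have hmem := Submodule.smul_mem M1 (⟨_, hcm⟩ : Psub n N ν)
      (Submodule.subset_span (⟨k' + 1 - j, hjk, rfl⟩ :
        hsymIn (Finset.univ : Finset (Fin N)) (k' + 1 - j) ∈
          {q : MvPolynomial (Fin N) ℂ |
            ∃ r : ℕ, 0 < r ∧ q = hsymIn (Finset.univ : Finset (Fin N)) r}))
    exact hmem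
  have haev : ∀ p ∈ Ideal.span ((X '' (Set.univ : Set (Fin N))) :
      Set (MvPolynomial (Fin N) ℂ)),
      aeval (fun i : Fin N => esymm (Fin N) ℂ ((i : ℕ) + 1)) p ∈ M1 := by
    intro p hp
    refine Submodule.span_induction ?_ ?_ ?_ ?_ hp
    · rintro x ⟨i, -, rfl⟩
      rw [aeval_X]
      exact hesymmMem ((i : ℕ) + 1) (Nat.succ_pos _)
    · rw [map_zero]; exact Submodule.zero_mem _
    · intro x y _ _ hx hy
      rw [map_add]; exact Submodule.add_mem _ hx hy
    · intro a x _ hx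
      rw [smul_eq_mul, map_mul]
      have hsym : MvPolynomial.IsSymmetric
          (aeval (fun i : Fin N => esymm (Fin N) ℂ ((i : ℕ) + 1)) a) := by
        rw [← esymmAlgHom_apply]
        exact (esymmAlgHom (Fin N) ℂ N a).2
      exact Submodule.smul_mem M1
        (⟨_, IlamAux.isSymmetric_mem_Psub ν hsym⟩ : Psub n N ν) hx
  have h2le : M1 ≤ Submodule.span (Psub n N ν)
      {q : MvPolynomial (Fin N) ℂ |
        (∀ σp : Equiv.Perm (Fin N), rename σp q = q) ∧ constantCoeff q = 0} := by
    rw [hM1]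
    apply Submodule.span_le.2
    rintro q ⟨r, hr, rfl⟩
    exact Submodule.subset_span
      ⟨fun σp => IlamAux.hsymIn_univ_symm r σp, IlamAux.constantCoeff_hsymIn _ hr⟩
  have h2ge : Submodule.span (Psub n N ν)
      {q : MvPolynomial (Fin N) ℂ |
        (∀ σp : Equiv.Perm (Fin N), rename σp q = q) ∧ constantCoeff q = 0} ≤ M1 := by
    apply Submodule.span_le.2
    rintro q ⟨hqs, hqc⟩
    obtain ⟨Φ, hΦ⟩ := esymmAlgHom_surjective (σ := Fin N) (R := ℂ) (n := N) (by simp) ⟨q, hqs⟩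
    have hΦval : aeval (fun i : Fin N => esymm (Fin N) ℂ ((i : ℕ) + 1)) Φ = q := by
      have := congrArg Subtype.val hΦ
      rwa [esymmAlgHom_apply] at this
    set c := constantCoeff Φ with hc
    have hΨc : constantCoeff (Φ - MvPolynomial.C c) = 0 := by
      rw [map_sub, constantCoeff_C, hc, sub_self]
    have hΨmem : Φ - MvPolynomial.C c ∈ Ideal.span ((X '' (Set.univ : Set (Fin N))) :
        Set (MvPolynomial (Fin N) ℂ)) := by
      rw [mem_ideal_span_X_image]
      intro m hm
      have hm0 : m ≠ 0 := by
        rintro rfl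
        exact (MvPolynomial.mem_support_iff.1 hm) hΨc
      rcases Finsupp.ne_iff.1 hm0 with ⟨i, hi⟩
      exact ⟨i, Set.mem_univ i, by simpa using hi⟩
    have hmemΨ := haev _ hΨmem
    have hcc : c = 0 := by
      have h6 : q = aeval (fun i : Fin N => esymm (Fin N) ℂ ((i : ℕ) + 1))
          (Φ - MvPolynomial.C c) + MvPolynomial.C c := by
        rw [map_sub, aeval_C, hΦval]
        simp [MvPolynomial.algebraMap_eq]
      have h7 := congrArg constantCoeff h6
      rw [hqc, map_add, hconst0 _ hmemΨ, constantCoeff_C, zero_add] at h7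
      exact h7.symm
    have h8 : q = aeval (fun i : Fin N => esymm (Fin N) ℂ ((i : ℕ) + 1))
        (Φ - MvPolynomial.C c) := by
      rw [map_sub, aeval_C, hΦval, hcc]
      simp
    rw [h8]
    exact hmemΨ
  exact ⟨h1, h1.trans (le_antisymm h2le h2ge)⟩

end
end

section
/- Let α and β be partitions of N all of whose parts are at most n, and let m ≥ 0 be an integer. Let α″ (respectively β″) be the partition of N + nm obtained by prepending m parts equal to n to α (respectively β). Then K^{(m+N)}_{α,β}(t) = K^{(m+N)}_{α″,β″}(t), where on the left-hand side α and β are padded with zeros to length m+N. -/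
open Finset

/-- The index type for the positive roots `ε_a − ε_b`, `a < b`, of `gl_M`. -/
abbrev RootIdx (M : ℕ) := {q : Fin M × Fin M // q.1 < q.2}

/-- The positive root `ε_a − ε_b` as an integer vector. -/
def root {M : ℕ} (q : RootIdx M) : Fin M → ℤ :=
  fun x => (if x = q.1.1 then 1 else 0) - (if x = q.1.2 then 1 else 0)

/-- `c_k(ξ)`: the number of tuples `(m_α)` of non-negative integers indexed by the positive
roots with `Σ_α m_α · α = ξ` and `Σ_α m_α = k`. -/
noncomputable def rootCount (M : ℕ) (ξ : Fin M → ℤ) (k : ℕ) : ℕ :=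
  Nat.card {f : RootIdx M → ℕ //
    (∑ q : RootIdx M, f q) = k ∧
      ∀ a : Fin M, (∑ q : RootIdx M, (f q : ℤ) * root q a) = ξ a}

/-- The generating function `P_M(ξ; t) = Σ_k c_k(ξ) t^k`. -/
noncomputable def Pseries (M : ℕ) (ξ : Fin M → ℤ) : PowerSeries ℤ :=
  PowerSeries.mk fun k => (rootCount M ξ k : ℤ)

/-- `δ_M = (M−1, M−2, …, 1, 0)`. -/
def delta (M : ℕ) : Fin M → ℤ := fun a => (M : ℤ) - 1 - (a : ℕ)

/-- The Kostka–Foulkes polynomial at level `M`: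
`K^{(M)}_{λ,μ}(t) = Σ_{σ ∈ S_M} sgn(σ)·P_M(σ(λ+δ_M) − (μ+δ_M); t)`. -/
noncomputable def KostkaFoulkes (M : ℕ) (lam mu : Fin M → ℕ) : PowerSeries ℤ :=
  ∑ σ : Equiv.Perm (Fin M),
    ((Equiv.Perm.sign σ : ℤˣ) : ℤ) •
      Pseries M (fun a => ((lam (σ⁻¹ a) : ℤ) + delta M (σ⁻¹ a)) - ((mu a : ℤ) + delta M a))


/-- Prepending `m` parts equal to `n` to a partition of `N` with parts at most `n`
(everything padded with zeros to length `m + N`). -/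
def prependParts (n N m : ℕ) (α : Fin (m + N) → ℕ) : Fin (m + N) → ℕ :=
  fun a => if h : (a : ℕ) < m then n else α ⟨(a : ℕ) - m, by have := a.isLt; omega⟩

namespace KFAux

/-- sum of a root over an initial segment `{a | a.1 < c}`. -/
lemma sum_root_initial {M : ℕ} (q : RootIdx M) (c : ℕ) :
    ∑ a ∈ Finset.univ.filter (fun a : Fin M => a.1 < c), root q a
      = (if q.1.1.1 < c then 1 else 0) - (if q.1.2.1 < c then 1 else 0) := by
  unfold root
  rw [Finset.sum_sub_distrib]
  congr 1 <;>
  · rw [Finset.sum_ite_eq' (Finset.univ.filter (fun a : Fin M => a.1 < c))]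
    simp

/-- swap of the double sum. -/
lemma sum_initial_eq {M c : ℕ} {ξ : Fin M → ℤ} {f : RootIdx M → ℕ}
    (hf : ∀ a : Fin M, (∑ q : RootIdx M, (f q : ℤ) * root q a) = ξ a) :
    ∑ a ∈ Finset.univ.filter (fun a : Fin M => a.1 < c), ξ a
      = ∑ q : RootIdx M, (f q : ℤ) *
          ((if q.1.1.1 < c then 1 else 0) - (if q.1.2.1 < c then 1 else 0)) := by
  have : ∑ a ∈ Finset.univ.filter (fun a : Fin M => a.1 < c), ξ a
      = ∑ a ∈ Finset.univ.filter (fun a : Fin M => a.1 < c),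
          ∑ q : RootIdx M, (f q : ℤ) * root q a := by
    refine Finset.sum_congr rfl fun a _ => (hf a).symm
  rw [this, Finset.sum_comm]
  refine Finset.sum_congr rfl fun q _ => ?_
  rw [← Finset.mul_sum, sum_root_initial]

lemma ind_nonneg {M c : ℕ} (q : RootIdx M) :
    (0 : ℤ) ≤ (if q.1.1.1 < c then 1 else 0) - (if q.1.2.1 < c then 1 else 0) := by
  have h : q.1.1.1 < q.1.2.1 := q.2
  split_ifs <;> omega

/-- crossing roots get multiplicity zero when the initial block sums to zero. -/
lemma crossing_zero {M c : ℕ} {ξ : Fin M → ℤ}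
    (h0 : ∑ a ∈ Finset.univ.filter (fun a : Fin M => a.1 < c), ξ a = 0)
    {f : RootIdx M → ℕ}
    (hf : ∀ a : Fin M, (∑ q : RootIdx M, (f q : ℤ) * root q a) = ξ a)
    {q : RootIdx M} (hq1 : q.1.1.1 < c) (hq2 : ¬ q.1.2.1 < c) : f q = 0 := by
  have key := (sum_initial_eq (c := c) hf).symm.trans h0
  have hz := (Finset.sum_eq_zero_iff_of_nonneg (fun p _ =>
      mul_nonneg (by positivity) (ind_nonneg p))).1 key q (Finset.mem_univ q)
  rw [if_pos hq1, if_neg hq2] at hz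
  simpa using hz

/-- any solution forces the total sum of ξ to be zero. -/
lemma total_zero {M : ℕ} {ξ : Fin M → ℤ} {f : RootIdx M → ℕ}
    (hf : ∀ a : Fin M, (∑ q : RootIdx M, (f q : ℤ) * root q a) = ξ a) :
    ∑ a ∈ Finset.univ.filter (fun a : Fin M => a.1 < M), ξ a = 0 := by
  rw [sum_initial_eq (c := M) hf]
  refine Finset.sum_eq_zero fun q _ => ?_
  rw [if_pos q.1.1.isLt, if_pos q.1.2.isLt]
  ring

/-- If an initial partial sum of ξ is negative then the generating series vanishes. -/
lemma Pseries_eq_zero {M c : ℕ} {ξ : Fin M → ℤ}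
    (h : ∑ a ∈ Finset.univ.filter (fun a : Fin M => a.1 < c), ξ a < 0) :
    Pseries M ξ = 0 := by
  have hempty : ∀ k, rootCount M ξ k = 0 := by
    intro k
    have : IsEmpty {f : RootIdx M → ℕ //
        (∑ q : RootIdx M, f q) = k ∧
          ∀ a : Fin M, (∑ q : RootIdx M, (f q : ℤ) * root q a) = ξ a} := by
      constructor
      rintro ⟨f, -, hf⟩
      have := sum_initial_eq (c := c) hf
      have hnn : (0:ℤ) ≤ ∑ q : RootIdx M, (f q : ℤ) *
          ((if q.1.1.1 < c then 1 else 0) - (if q.1.2.1 < c then 1 else 0)) :=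
        Finset.sum_nonneg fun p _ => mul_nonneg (by positivity) (ind_nonneg p)
      omega
    exact Nat.card_of_isEmpty
  ext k
  simp [Pseries, hempty]

/-- a permutation mapping a (finite-type) predicate into itself maps it onto itself. -/
lemma perm_pred_iff {M : ℕ} (π : Equiv.Perm (Fin M)) (p : Fin M → Prop) [DecidablePred p]
    (h : ∀ a, p a → p (π a)) : ∀ a, p (π a) ↔ p a := by
  classical
  set T : Finset (Fin M) := Finset.univ.filter p with hT
  have hsub : T.image π ⊆ T := by
    intro b hb
    simp only [hT, Finset.mem_image, Finset.mem_filter, Finset.mem_univ, true_and] at hb ⊢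
    obtain ⟨a, ha, rfl⟩ := hb
    exact h a ha
  have heq : T.image π = T :=
    Finset.eq_of_subset_of_card_le hsub
      (le_of_eq (Finset.card_image_of_injective T π.injective).symm)
  intro a
  constructor
  · intro hpa
    have : π a ∈ T.image π := by
      rw [heq]; simp [hT, hpa]
    simp only [Finset.mem_image] at this
    obtain ⟨b, hb, hba⟩ := this
    have : b = a := π.injective hba
    subst this
    simpa [hT] using hb
  · exact h a

/-- the "gap" lemma: a permutation moving something from above the cut to below, where the
values below the cut are all `≥ K` and those above are all `< K`, makes the initial partial
sum negative. -/
lemma gap {M : ℕ} (v w : Fin M → ℤ) (c : ℕ) (K : ℤ) (π : Equiv.Perm (Fin M))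
    (hv1 : ∀ a : Fin M, a.1 < c → K ≤ v a) (hv2 : ∀ a : Fin M, ¬ a.1 < c → v a < K)
    (hvw : ∑ a ∈ Finset.univ.filter (fun a : Fin M => a.1 < c), v a
         = ∑ a ∈ Finset.univ.filter (fun a : Fin M => a.1 < c), w a)
    (hbad : ∃ a : Fin M, a.1 < c ∧ ¬ (π a).1 < c) :
    ∑ a ∈ Finset.univ.filter (fun a : Fin M => a.1 < c), (v (π a) - w a) < 0 := by
  classical
  set T : Finset (Fin M) := Finset.univ.filter (fun a : Fin M => a.1 < c) with hT
  set S : Finset (Fin M) := T.image π with hS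
  have hcard : S.card = T.card := Finset.card_image_of_injective T π.injective
  have hsum1 : ∑ a ∈ T, v (π a) = ∑ b ∈ S, v b :=
    (Finset.sum_image (fun x _ y _ hxy => π.injective hxy)).symm
  rw [Finset.sum_sub_distrib, hsum1, ← hvw, sub_neg]
  -- show ∑_{S} v < ∑_{T} v
  have hST : (S \ T).card = (T \ S).card := by
    have h1 := Finset.card_inter_add_card_sdiff S T
    have h2 := Finset.card_inter_add_card_sdiff T S
    rw [Finset.inter_comm] at h2
    omega
  have hd : 1 ≤ (S \ T).card := by
    obtain ⟨a, ha, hna⟩ := hbad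
    have : π a ∈ S \ T := by
      simp only [hS, hT, Finset.mem_sdiff, Finset.mem_image, Finset.mem_filter,
        Finset.mem_univ, true_and]
      exact ⟨⟨a, ha, rfl⟩, hna⟩
    exact Finset.card_pos.2 ⟨_, this⟩
  have hup : ∑ b ∈ S \ T, v b ≤ (S \ T).card • (K - 1) :=
    Finset.sum_le_card_nsmul _ _ _ (fun b hb => by
      have : ¬ b.1 < c := by
        have := (Finset.mem_sdiff.1 hb).2
        simpa [hT] using this
      have := hv2 b this; omega)
  have hdown : (T \ S).card • K ≤ ∑ b ∈ T \ S, v b :=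
    Finset.card_nsmul_le_sum _ _ _ (fun b hb => by
      have : b.1 < c := by
        have := (Finset.mem_sdiff.1 hb).1
        simpa [hT] using this
      exact hv1 b this)
  have e1 : ∑ b ∈ S ∩ T, v b + ∑ b ∈ S \ T, v b = ∑ b ∈ S, v b :=
    Finset.sum_inter_add_sum_sdiff S T v
  have e2 : ∑ b ∈ T ∩ S, v b + ∑ b ∈ T \ S, v b = ∑ b ∈ T, v b :=
    Finset.sum_inter_add_sum_sdiff T S v
  have e3 : S ∩ T = T ∩ S := Finset.inter_comm S T
  rw [e3] at e1
  have hsm1 : (S \ T).card • (K - 1) = ((S \ T).card : ℤ) * (K - 1) := nsmul_eq_mul _ _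
  have hsm2 : (T \ S).card • K = ((T \ S).card : ℤ) * K := nsmul_eq_mul _ _
  have hc1 : (1 : ℤ) ≤ ((S \ T).card : ℤ) := by exact_mod_cast hd
  have hc2 : ((S \ T).card : ℤ) = ((T \ S).card : ℤ) := by exact_mod_cast hST
  rw [hsm1] at hup
  rw [hsm2] at hdown
  rw [hc2] at hup
  nlinarith [hup, hdown]

/-- a monotone ℕ-valued vector of length `M ≥ N` summing to `N` vanishes from index `N` on. -/
lemma tail_zero {M N : ℕ} (α : Fin M → ℕ)
    (hmono : ∀ a b : Fin M, a ≤ b → α b ≤ α a)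
    (hsum : ∑ a, α a = N) (a : Fin M) (ha : N ≤ a.1) : α a = 0 := by
  by_contra h
  have h1 : 1 ≤ α a := Nat.one_le_iff_ne_zero.2 h
  have h2 : ∀ b ∈ Finset.Iic a, 1 ≤ α b := fun b hb =>
    le_trans h1 (hmono b a (Finset.mem_Iic.1 hb))
  have h3 : (Finset.Iic a).card ≤ ∑ b ∈ Finset.Iic a, α b := by
    have := Finset.card_nsmul_le_sum _ _ 1 h2
    simpa using this
  rw [Fin.card_Iic] at h3
  have h4 : ∑ b ∈ Finset.Iic a, α b ≤ ∑ b, α b :=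
    Finset.sum_le_sum_of_subset (Finset.subset_univ _)
  omega

/-- rotation of `Fin (c+d)` sending the first `d` indices to the last `d`. -/
def rot (c d : ℕ) : Equiv.Perm (Fin (c + d)) where
  toFun b := if h : b.1 < d then ⟨b.1 + c, by omega⟩
    else ⟨b.1 - d, by have := b.isLt; omega⟩
  invFun a := if h : a.1 < c then ⟨a.1 + d, by omega⟩
    else ⟨a.1 - c, by have := a.isLt; omega⟩
  left_inv b := by
    by_cases h : b.1 < d
    · have hc : ¬ (b.1 + c < c) := by omega
      simp only [dif_pos h, dif_neg hc]
      exact Fin.ext (by simp)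
    · have := b.isLt
      have hc : b.1 - d < c := by omega
      simp only [dif_neg h, dif_pos hc]
      exact Fin.ext (by simp; omega)
  right_inv a := by
    by_cases h : a.1 < c
    · have hc : ¬ (a.1 + d < d) := by omega
      simp only [dif_pos h, dif_neg hc]
      exact Fin.ext (by simp)
    · have := a.isLt
      have hc : a.1 - c < d := by omega
      simp only [dif_neg h, dif_pos hc]
      exact Fin.ext (by simp; omega)

lemma rot_apply_lt {c d : ℕ} {b : Fin (c + d)} (h : b.1 < d) :
    ((rot c d) b).1 = b.1 + c := by simp [rot, Equiv.coe_fn_mk, dif_pos h]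

lemma rot_apply_ge {c d : ℕ} {b : Fin (c + d)} (h : ¬ b.1 < d) :
    ((rot c d) b).1 = b.1 - d := by simp [rot, Equiv.coe_fn_mk, dif_neg h]

lemma rot_symm_apply_lt {c d : ℕ} {a : Fin (c + d)} (h : a.1 < c) :
    ((rot c d).symm a).1 = a.1 + d := by simp [rot, Equiv.coe_fn_symm_mk, dif_pos h]

lemma rot_symm_apply_ge {c d : ℕ} {a : Fin (c + d)} (h : ¬ a.1 < c) :
    ((rot c d).symm a).1 = a.1 - c := by simp [rot, Equiv.coe_fn_symm_mk, dif_neg h]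

/-- forward map on root indices induced by the rotation (crossing roots get reversed). -/
def rrFun (c d : ℕ) (q : RootIdx (c + d)) : RootIdx (c + d) :=
  if h1 : q.1.1.1 < d then
    if h2 : q.1.2.1 < d then
      ⟨(⟨q.1.1.1 + c, by omega⟩, ⟨q.1.2.1 + c, by omega⟩),
        Fin.mk_lt_mk.2 (by have : q.1.1.1 < q.1.2.1 := q.2; omega)⟩
    else
      ⟨(⟨q.1.2.1 - d, by have := q.1.2.isLt; omega⟩, ⟨q.1.1.1 + c, by omega⟩),
        Fin.mk_lt_mk.2 (by have := q.1.2.isLt; omega)⟩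
  else
    ⟨(⟨q.1.1.1 - d, by have := q.1.1.isLt; omega⟩,
      ⟨q.1.2.1 - d, by have := q.1.2.isLt; omega⟩),
        Fin.mk_lt_mk.2 (by have : q.1.1.1 < q.1.2.1 := q.2; omega)⟩

/-- backward map on root indices induced by the rotation. -/
def rriFun (c d : ℕ) (p : RootIdx (c + d)) : RootIdx (c + d) :=
  if h1 : p.1.1.1 < c then
    if h2 : p.1.2.1 < c then
      ⟨(⟨p.1.1.1 + d, by omega⟩, ⟨p.1.2.1 + d, by omega⟩),
        Fin.mk_lt_mk.2 (by have : p.1.1.1 < p.1.2.1 := p.2; omega)⟩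
    else
      ⟨(⟨p.1.2.1 - c, by have := p.1.2.isLt; omega⟩, ⟨p.1.1.1 + d, by omega⟩),
        Fin.mk_lt_mk.2 (by have := p.1.2.isLt; omega)⟩
  else
    ⟨(⟨p.1.1.1 - c, by have := p.1.1.isLt; omega⟩,
      ⟨p.1.2.1 - c, by have := p.1.2.isLt; omega⟩),
        Fin.mk_lt_mk.2 (by have : p.1.1.1 < p.1.2.1 := p.2; omega)⟩

lemma rrFun_A {c d x y : ℕ} (hx : x < c + d) (hy : y < c + d) (hq : (⟨x,hx⟩ : Fin (c+d)) < ⟨y,hy⟩)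
    (h1 : x < d) (h2 : y < d) :
    rrFun c d ⟨(⟨x,hx⟩,⟨y,hy⟩), hq⟩ =
      ⟨(⟨x + c, by omega⟩, ⟨y + c, by omega⟩), Fin.mk_lt_mk.2 (by have : x < y := hq; omega)⟩ := by
  simp only [rrFun]; rw [dif_pos h1, dif_pos h2]

lemma rrFun_B {c d x y : ℕ} (hx : x < c + d) (hy : y < c + d) (hq : (⟨x,hx⟩ : Fin (c+d)) < ⟨y,hy⟩)
    (h1 : x < d) (h2 : ¬ y < d) :
    rrFun c d ⟨(⟨x,hx⟩,⟨y,hy⟩), hq⟩ =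
      ⟨(⟨y - d, by omega⟩, ⟨x + c, by omega⟩), Fin.mk_lt_mk.2 (by omega)⟩ := by
  simp only [rrFun]; rw [dif_pos h1, dif_neg h2]

lemma rrFun_C {c d x y : ℕ} (hx : x < c + d) (hy : y < c + d) (hq : (⟨x,hx⟩ : Fin (c+d)) < ⟨y,hy⟩)
    (h1 : ¬ x < d) :
    rrFun c d ⟨(⟨x,hx⟩,⟨y,hy⟩), hq⟩ =
      ⟨(⟨x - d, by omega⟩, ⟨y - d, by omega⟩), Fin.mk_lt_mk.2 (by have : x < y := hq; omega)⟩ := by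
  simp only [rrFun]; rw [dif_neg h1]

lemma rriFun_A {c d x y : ℕ} (hx : x < c + d) (hy : y < c + d) (hq : (⟨x,hx⟩ : Fin (c+d)) < ⟨y,hy⟩)
    (h1 : x < c) (h2 : y < c) :
    rriFun c d ⟨(⟨x,hx⟩,⟨y,hy⟩), hq⟩ =
      ⟨(⟨x + d, by omega⟩, ⟨y + d, by omega⟩), Fin.mk_lt_mk.2 (by have : x < y := hq; omega)⟩ := by
  simp only [rriFun]; rw [dif_pos h1, dif_pos h2]

lemma rriFun_B {c d x y : ℕ} (hx : x < c + d) (hy : y < c + d) (hq : (⟨x,hx⟩ : Fin (c+d)) < ⟨y,hy⟩)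
    (h1 : x < c) (h2 : ¬ y < c) :
    rriFun c d ⟨(⟨x,hx⟩,⟨y,hy⟩), hq⟩ =
      ⟨(⟨y - c, by omega⟩, ⟨x + d, by omega⟩), Fin.mk_lt_mk.2 (by omega)⟩ := by
  simp only [rriFun]; rw [dif_pos h1, dif_neg h2]

lemma rriFun_C {c d x y : ℕ} (hx : x < c + d) (hy : y < c + d) (hq : (⟨x,hx⟩ : Fin (c+d)) < ⟨y,hy⟩)
    (h1 : ¬ x < c) :
    rriFun c d ⟨(⟨x,hx⟩,⟨y,hy⟩), hq⟩ =
      ⟨(⟨x - c, by omega⟩, ⟨y - c, by omega⟩), Fin.mk_lt_mk.2 (by have : x < y := hq; omega)⟩ := by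
  simp only [rriFun]; rw [dif_neg h1]

lemma rr_left_inv (c d : ℕ) (q : RootIdx (c + d)) : rriFun c d (rrFun c d q) = q := by
  obtain ⟨⟨⟨x, hx⟩, ⟨y, hy⟩⟩, hq⟩ := q
  have hxy : x < y := hq
  by_cases h1 : x < d
  · by_cases h2 : y < d
    · rw [rrFun_A hx hy hq h1 h2,
        rriFun_C (x := x + c) (y := y + c) (by omega) (by omega)
          (Fin.mk_lt_mk.2 (by omega)) (by omega)]
      simp only [Subtype.mk.injEq, Prod.mk.injEq, Fin.mk.injEq]
      omega
    · rw [rrFun_B hx hy hq h1 h2,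
        rriFun_B (x := y - d) (y := x + c) (by omega) (by omega)
          (Fin.mk_lt_mk.2 (by omega)) (by omega) (by omega)]
      simp only [Subtype.mk.injEq, Prod.mk.injEq, Fin.mk.injEq]
      omega
  · rw [rrFun_C hx hy hq h1,
      rriFun_A (x := x - d) (y := y - d) (by omega) (by omega)
        (Fin.mk_lt_mk.2 (by omega)) (by omega) (by omega)]
    simp only [Subtype.mk.injEq, Prod.mk.injEq, Fin.mk.injEq]
    omega

lemma rr_right_inv (c d : ℕ) (p : RootIdx (c + d)) : rrFun c d (rriFun c d p) = p := by
  obtain ⟨⟨⟨x, hx⟩, ⟨y, hy⟩⟩, hq⟩ := p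
  have hxy : x < y := hq
  by_cases h1 : x < c
  · by_cases h2 : y < c
    · rw [rriFun_A hx hy hq h1 h2,
        rrFun_C (x := x + d) (y := y + d) (by omega) (by omega)
          (Fin.mk_lt_mk.2 (by omega)) (by omega)]
      simp only [Subtype.mk.injEq, Prod.mk.injEq, Fin.mk.injEq]
      omega
    · rw [rriFun_B hx hy hq h1 h2,
        rrFun_B (x := y - c) (y := x + d) (by omega) (by omega)
          (Fin.mk_lt_mk.2 (by omega)) (by omega) (by omega)]
      simp only [Subtype.mk.injEq, Prod.mk.injEq, Fin.mk.injEq]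
      omega
  · rw [rriFun_C hx hy hq h1,
      rrFun_A (x := x - c) (y := y - c) (by omega) (by omega)
        (Fin.mk_lt_mk.2 (by omega)) (by omega) (by omega)]
    simp only [Subtype.mk.injEq, Prod.mk.injEq, Fin.mk.injEq]
    omega

def rotRoot (c d : ℕ) : RootIdx (c + d) ≃ RootIdx (c + d) where
  toFun := rrFun c d
  invFun := rriFun c d
  left_inv := rr_left_inv c d
  right_inv := rr_right_inv c d

lemma rrFun_fst {c d : ℕ} (q : RootIdx (c + d)) (h : q.1.1.1 < d → q.1.2.1 < d) :
    (rrFun c d q).1.1 = rot c d q.1.1 := by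
  by_cases h1 : q.1.1.1 < d
  · rw [rrFun, dif_pos h1, dif_pos (h h1)]
    exact Fin.ext (by rw [rot_apply_lt h1])
  · rw [rrFun, dif_neg h1]
    exact Fin.ext (by rw [rot_apply_ge h1])

lemma rrFun_snd {c d : ℕ} (q : RootIdx (c + d)) (h : q.1.1.1 < d → q.1.2.1 < d) :
    (rrFun c d q).1.2 = rot c d q.1.2 := by
  by_cases h1 : q.1.1.1 < d
  · rw [rrFun, dif_pos h1, dif_pos (h h1)]
    exact Fin.ext (by rw [rot_apply_lt (h h1)])
  · have h2 : ¬ q.1.2.1 < d := by have : q.1.1.1 < q.1.2.1 := q.2; omega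
    rw [rrFun, dif_neg h1]
    exact Fin.ext (by rw [rot_apply_ge h2])

lemma rriFun_fst {c d : ℕ} (p : RootIdx (c + d)) (h : p.1.1.1 < c → p.1.2.1 < c) :
    (rriFun c d p).1.1 = (rot c d).symm p.1.1 := by
  by_cases h1 : p.1.1.1 < c
  · rw [rriFun, dif_pos h1, dif_pos (h h1)]
    exact Fin.ext (by rw [rot_symm_apply_lt h1])
  · rw [rriFun, dif_neg h1]
    exact Fin.ext (by rw [rot_symm_apply_ge h1])

lemma rriFun_snd {c d : ℕ} (p : RootIdx (c + d)) (h : p.1.1.1 < c → p.1.2.1 < c) :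
    (rriFun c d p).1.2 = (rot c d).symm p.1.2 := by
  by_cases h1 : p.1.1.1 < c
  · rw [rriFun, dif_pos h1, dif_pos (h h1)]
    exact Fin.ext (by rw [rot_symm_apply_lt (h h1)])
  · have h2 : ¬ p.1.2.1 < c := by have : p.1.1.1 < p.1.2.1 := p.2; omega
    rw [rriFun, dif_neg h1]
    exact Fin.ext (by rw [rot_symm_apply_ge h2])

lemma root_rrFun {c d : ℕ} (q : RootIdx (c + d)) (h : q.1.1.1 < d → q.1.2.1 < d)
    (a : Fin (c + d)) : root (rrFun c d q) a = root q ((rot c d).symm a) := by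
  simp only [root, rrFun_fst q h, rrFun_snd q h, Equiv.symm_apply_eq]

lemma root_rriFun {c d : ℕ} (p : RootIdx (c + d)) (h : p.1.1.1 < c → p.1.2.1 < c)
    (a : Fin (c + d)) : root (rriFun c d p) a = root p (rot c d a) := by
  simp only [root, rriFun_fst p h, rriFun_snd p h, Equiv.eq_symm_apply]

lemma sum_filter_not_lt {c d : ℕ} (ξ : Fin (c + d) → ℤ) :
    ∑ a ∈ Finset.univ.filter (fun a : Fin (c + d) => ¬ a.1 < c), ξ ((rot c d).symm a)
      = ∑ b ∈ Finset.univ.filter (fun b : Fin (c + d) => b.1 < d), ξ b := by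
  refine Finset.sum_nbij' (fun a => (rot c d).symm a) (fun b => rot c d b) ?_ ?_ ?_ ?_ ?_
  · intro a ha
    simp only [Finset.mem_filter, Finset.mem_univ, true_and] at ha ⊢
    rw [rot_symm_apply_ge ha]
    have := a.isLt; omega
  · intro b hb
    simp only [Finset.mem_filter, Finset.mem_univ, true_and] at hb ⊢
    rw [rot_apply_lt hb]
    omega
  · intro a _; exact (rot c d).apply_symm_apply a
  · intro b _; exact (rot c d).symm_apply_apply b
  · intro a _; rfl

/-- Rotation invariance of the generating series, assuming the first block sums to zero. -/
lemma rotRoot_apply (c d : ℕ) (q : RootIdx (c + d)) : rotRoot c d q = rrFun c d q := rfl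

lemma rotRoot_symm_apply (c d : ℕ) (q : RootIdx (c + d)) :
    (rotRoot c d).symm q = rriFun c d q := rfl

lemma transfer {c d : ℕ} {ξ : Fin (c + d) → ℤ}
    (h0 : ∑ a ∈ Finset.univ.filter (fun a : Fin (c + d) => a.1 < d), ξ a = 0)
    (f : RootIdx (c + d) → ℕ)
    (hf : ∀ a : Fin (c + d), (∑ q : RootIdx (c + d), (f q : ℤ) * root q a) = ξ a)
    (a : Fin (c + d)) :
    (∑ q : RootIdx (c + d), (f ((rotRoot c d).symm q) : ℤ) * root q a)
      = ξ ((rot c d).symm a) := by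
  have e1 : ∑ q : RootIdx (c + d), (f ((rotRoot c d).symm q) : ℤ) * root q a
      = ∑ p : RootIdx (c + d), (f p : ℤ) * root (rotRoot c d p) a := by
    refine (Fintype.sum_equiv (rotRoot c d)
      (fun p => (f p : ℤ) * root (rotRoot c d p) a)
      (fun q => (f ((rotRoot c d).symm q) : ℤ) * root q a) (fun p => ?_)).symm
    simp
  rw [e1]
  have e2 : ∀ p : RootIdx (c + d),
      (f p : ℤ) * root (rotRoot c d p) a = (f p : ℤ) * root p ((rot c d).symm a) := by
    intro p
    by_cases hp : p.1.1.1 < d → p.1.2.1 < d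
    · rw [rotRoot_apply, root_rrFun p hp]
    · push_neg at hp
      rw [crossing_zero h0 hf hp.1 (by omega)]
      simp
  rw [Finset.sum_congr rfl (fun p _ => e2 p)]
  exact hf _

lemma transfer_back {c d : ℕ} {ξ : Fin (c + d) → ℤ}
    (h0 : ∑ a ∈ Finset.univ.filter (fun a : Fin (c + d) => a.1 < d), ξ a = 0)
    (g : RootIdx (c + d) → ℕ)
    (hg : ∀ a : Fin (c + d), (∑ q : RootIdx (c + d), (g q : ℤ) * root q a)
      = ξ ((rot c d).symm a))
    (a : Fin (c + d)) :
    (∑ q : RootIdx (c + d), (g (rotRoot c d q) : ℤ) * root q a) = ξ a := by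
  have huniv0 := total_zero hg
  rw [Finset.filter_true_of_mem (fun b _ => b.isLt)] at huniv0
  have huniv : ∑ b : Fin (c + d), ξ ((rot c d).symm b) = 0 := by simpa using huniv0
  have h0' : ∑ b ∈ Finset.univ.filter (fun b : Fin (c + d) => b.1 < c),
      ξ ((rot c d).symm b) = 0 := by
    have hsplit := Finset.sum_filter_add_sum_filter_not Finset.univ
      (fun b : Fin (c + d) => b.1 < c) (fun b => ξ ((rot c d).symm b))
    rw [sum_filter_not_lt ξ, h0] at hsplit
    have hsplit2 : (∑ b ∈ Finset.univ.filter (fun b : Fin (c + d) => b.1 < c),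
        ξ ((rot c d).symm b)) + 0 = ∑ b : Fin (c + d), ξ ((rot c d).symm b) := by
      simpa using hsplit
    omega
  have e1 : ∑ q : RootIdx (c + d), (g (rotRoot c d q) : ℤ) * root q a
      = ∑ p : RootIdx (c + d), (g p : ℤ) * root ((rotRoot c d).symm p) a := by
    refine Fintype.sum_equiv (rotRoot c d)
      (fun q => (g (rotRoot c d q) : ℤ) * root q a)
      (fun p => (g p : ℤ) * root ((rotRoot c d).symm p) a) (fun q => ?_)
    simp
  rw [e1]
  have e2 : ∀ p : RootIdx (c + d),
      (g p : ℤ) * root ((rotRoot c d).symm p) a = (g p : ℤ) * root p (rot c d a) := by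
    intro p
    by_cases hp : p.1.1.1 < c → p.1.2.1 < c
    · rw [rotRoot_symm_apply, root_rriFun p hp]
    · push_neg at hp
      rw [crossing_zero h0' hg hp.1 (by omega)]
      simp
  rw [Finset.sum_congr rfl (fun p _ => e2 p)]
  rw [hg (rot c d a), Equiv.symm_apply_apply]

lemma rootCount_rot (c d : ℕ) (ξ : Fin (c + d) → ℤ)
    (h0 : ∑ a ∈ Finset.univ.filter (fun a : Fin (c + d) => a.1 < d), ξ a = 0) (k : ℕ) :
    rootCount (c + d) ξ k = rootCount (c + d) (fun a => ξ ((rot c d).symm a)) k := by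
  refine Nat.card_eq_of_bijective (fun fp => ⟨fun q => fp.1 ((rotRoot c d).symm q),
    ((Equiv.sum_comp (rotRoot c d).symm fp.1).trans fp.2.1), transfer h0 fp.1 fp.2.2⟩) ⟨?_, ?_⟩
  · intro f1 f2 h
    apply Subtype.ext
    funext q
    have := congrFun (congrArg Subtype.val h) (rotRoot c d q)
    simpa [Equiv.symm_apply_apply] using this
  · rintro ⟨g, hk, hg⟩
    refine ⟨⟨fun q => g (rotRoot c d q),
      ((Equiv.sum_comp (rotRoot c d) g).trans hk), transfer_back h0 g hg⟩, ?_⟩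
    apply Subtype.ext
    funext q
    simp [Equiv.apply_symm_apply]

lemma Pseries_rot (c d : ℕ) (ξ : Fin (c + d) → ℤ)
    (h0 : ∑ a ∈ Finset.univ.filter (fun a : Fin (c + d) => a.1 < d), ξ a = 0) :
    Pseries (c + d) ξ = Pseries (c + d) (fun a => ξ ((rot c d).symm a)) := by
  have : (fun k => ((rootCount (c + d) ξ k : ℤ)))
      = fun k => ((rootCount (c + d) (fun a => ξ ((rot c d).symm a)) k : ℤ)) := by
    funext k
    rw [rootCount_rot c d ξ h0 k]
  rw [Pseries, Pseries, this]

end KFAux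

/-- Let `α`, `β` be partitions of `N` all of whose parts are at most `n` (padded with zeros
to length `m + N`), and let `α″`, `β″` be the partitions of `N + nm` obtained by prepending
`m` parts equal to `n`.  Then `K^{(m+N)}_{α,β}(t) = K^{(m+N)}_{α″,β″}(t)`. -/
theorem kostkaFoulkes_prepend (n N m : ℕ) (hn : 1 ≤ n) (hN : 1 ≤ N)
    (α β : Fin (m + N) → ℕ)
    (hα : ∀ a b : Fin (m + N), a ≤ b → α b ≤ α a)
    (hβ : ∀ a b : Fin (m + N), a ≤ b → β b ≤ β a)
    (hαle : ∀ a, α a ≤ n) (hβle : ∀ a, β a ≤ n)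
    (hαsum : ∑ a, α a = N) (hβsum : ∑ a, β a = N) :
    KostkaFoulkes (m + N) α β =
      KostkaFoulkes (m + N) (prependParts n N m α) (prependParts n N m β) := by
  classical
  have hα0 : ∀ a : Fin (m + N), N ≤ a.1 → α a = 0 := KFAux.tail_zero α hα hαsum
  have hβ0 : ∀ a : Fin (m + N), N ≤ a.1 → β a = 0 := KFAux.tail_zero β hβ hβsum
  -- sums over the initial block
  have hTα : ∑ a ∈ (Finset.univ.filter (fun a : Fin (m + N) => a.1 < N)), (α a : ℤ) = (N : ℤ) := by
    have h1 : ∑ a ∈ (Finset.univ.filter (fun a : Fin (m + N) => a.1 < N)), α a = N := by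
      have hsplit := Finset.sum_filter_add_sum_filter_not Finset.univ
        (fun a : Fin (m + N) => a.1 < N) α
      have hz : ∑ a ∈ Finset.univ.filter (fun a : Fin (m + N) => ¬ a.1 < N), α a = 0 :=
        Finset.sum_eq_zero (fun a ha => hα0 a (by
          have := Finset.mem_filter.1 ha; omega))
      rw [hz, hαsum] at hsplit
      omega
    have h2 := congrArg (Nat.cast : ℕ → ℤ) h1
    push_cast at h2
    exact h2
  have hTβ : ∑ a ∈ (Finset.univ.filter (fun a : Fin (m + N) => a.1 < N)), (β a : ℤ) = (N : ℤ) := by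
    have h1 : ∑ a ∈ (Finset.univ.filter (fun a : Fin (m + N) => a.1 < N)), β a = N := by
      have hsplit := Finset.sum_filter_add_sum_filter_not Finset.univ
        (fun a : Fin (m + N) => a.1 < N) β
      have hz : ∑ a ∈ Finset.univ.filter (fun a : Fin (m + N) => ¬ a.1 < N), β a = 0 :=
        Finset.sum_eq_zero (fun a ha => hβ0 a (by
          have := Finset.mem_filter.1 ha; omega))
      rw [hz, hβsum] at hsplit
      omega
    have h2 := congrArg (Nat.cast : ℕ → ℤ) h1
    push_cast at h2
    exact h2
  have hvw : ∑ a ∈ (Finset.univ.filter (fun a : Fin (m + N) => a.1 < N)), ((α a : ℤ) + delta (m + N) a) = ∑ a ∈ (Finset.univ.filter (fun a : Fin (m + N) => a.1 < N)), ((β a : ℤ) + delta (m + N) a) := by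
    rw [Finset.sum_add_distrib, Finset.sum_add_distrib, hTα, hTβ]
  have key : ∀ σ : Equiv.Perm (Fin (m + N)),
      ((Equiv.Perm.sign σ : ℤˣ) : ℤ) •
        Pseries (m + N) (fun a => ((α (σ⁻¹ a) : ℤ) + delta (m + N) (σ⁻¹ a))
          - ((β a : ℤ) + delta (m + N) a))
      = ((Equiv.Perm.sign ((MulAut.conj (KFAux.rot m N)).toEquiv σ) : ℤˣ) : ℤ) •
        Pseries (m + N) (fun a =>
          ((prependParts n N m α (((MulAut.conj (KFAux.rot m N)).toEquiv σ)⁻¹ a) : ℤ)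
            + delta (m + N) (((MulAut.conj (KFAux.rot m N)).toEquiv σ)⁻¹ a))
          - ((prependParts n N m β a : ℤ) + delta (m + N) a)) := by
    intro σ
    have hconj : ((MulAut.conj (KFAux.rot m N)).toEquiv σ) = (KFAux.rot m N) * σ * (KFAux.rot m N)⁻¹ := rfl
    have hsign : Equiv.Perm.sign ((MulAut.conj (KFAux.rot m N)).toEquiv σ) = Equiv.Perm.sign σ := by
      rw [hconj, map_mul, map_mul, map_inv, mul_comm (Equiv.Perm.sign (KFAux.rot m N)) (Equiv.Perm.sign σ),
        mul_inv_cancel_right]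
    have hτinv : ∀ a : Fin (m + N), (((MulAut.conj (KFAux.rot m N)).toEquiv σ)⁻¹) a
        = (KFAux.rot m N) (σ⁻¹ ((KFAux.rot m N).symm a)) := by
      intro a
      rw [hconj]
      simp [Equiv.Perm.mul_apply, Equiv.Perm.inv_def]
    by_cases hb : ∀ a : Fin (m + N), a.1 < N → ((σ⁻¹) a).1 < N
    · -- block case
      rw [hsign]
      have hiff := KFAux.perm_pred_iff σ⁻¹ (fun a => a.1 < N) hb
      have himg : (Finset.univ.filter (fun a : Fin (m + N) => a.1 < N)).image ⇑σ⁻¹ = (Finset.univ.filter (fun a : Fin (m + N) => a.1 < N)) := by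
        have hsub : (Finset.univ.filter (fun a : Fin (m + N) => a.1 < N)).image ⇑σ⁻¹ ⊆ (Finset.univ.filter (fun a : Fin (m + N) => a.1 < N)) := by
          intro b hbm
          simp only [Finset.mem_image, Finset.mem_filter, Finset.mem_univ, true_and]
            at hbm ⊢
          obtain ⟨x, hx, rfl⟩ := hbm
          exact hb x hx
        exact Finset.eq_of_subset_of_card_le hsub
          (le_of_eq (Finset.card_image_of_injective (Finset.univ.filter (fun a : Fin (m + N) => a.1 < N)) σ⁻¹.injective).symm)
      have hsum0 : ∑ a ∈ Finset.univ.filter (fun a : Fin (m + N) => a.1 < N),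
          (((α (σ⁻¹ a) : ℤ) + delta (m + N) (σ⁻¹ a)) - ((β a : ℤ) + delta (m + N) a)) = 0 := by
        rw [Finset.sum_sub_distrib]
        have h2 : ∑ a ∈ (Finset.univ.filter (fun a : Fin (m + N) => a.1 < N)), ((α (σ⁻¹ a) : ℤ) + delta (m + N) (σ⁻¹ a))
            = ∑ b ∈ (Finset.univ.filter (fun a : Fin (m + N) => a.1 < N)), ((α b : ℤ) + delta (m + N) b) := by
          calc ∑ a ∈ (Finset.univ.filter (fun a : Fin (m + N) => a.1 < N)),
                ((α (σ⁻¹ a) : ℤ) + delta (m + N) (σ⁻¹ a))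
              = ∑ b ∈ (Finset.univ.filter (fun a : Fin (m + N) => a.1 < N)).image ⇑σ⁻¹,
                ((α b : ℤ) + delta (m + N) b) :=
                (Finset.sum_image (f := fun b => (α b : ℤ) + delta (m + N) b)
                  (g := ⇑σ⁻¹) (fun x _ y _ hxy => σ⁻¹.injective hxy)).symm
            _ = ∑ b ∈ (Finset.univ.filter (fun a : Fin (m + N) => a.1 < N)),
                ((α b : ℤ) + delta (m + N) b) := by rw [himg]
        rw [h2, hvw]
        ring
      rw [KFAux.Pseries_rot m N _ hsum0]
      have hfun : (fun a => (fun a => ((α (σ⁻¹ a) : ℤ) + delta (m + N) (σ⁻¹ a))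
            - ((β a : ℤ) + delta (m + N) a)) ((KFAux.rot m N).symm a))
          = (fun a =>
            ((prependParts n N m α (((MulAut.conj (KFAux.rot m N)).toEquiv σ)⁻¹ a) : ℤ)
              + delta (m + N) (((MulAut.conj (KFAux.rot m N)).toEquiv σ)⁻¹ a))
            - ((prependParts n N m β a : ℤ) + delta (m + N) a)) := by
        funext a
        dsimp only
        by_cases ha : a.1 < m
        · have h1 : ((KFAux.rot m N).symm a).1 = a.1 + N := KFAux.rot_symm_apply_lt ha
          have hbN : ¬ (σ⁻¹ ((KFAux.rot m N).symm a)).1 < N := by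
            intro hcon
            have := (hiff ((KFAux.rot m N).symm a)).1 hcon
            omega
          have hτ : (((MulAut.conj (KFAux.rot m N)).toEquiv σ)⁻¹) a = KFAux.rot m N (σ⁻¹ ((KFAux.rot m N).symm a)) := by
            rw [hτinv a]
          have hτ1 : ((((MulAut.conj (KFAux.rot m N)).toEquiv σ)⁻¹) a).1
              = (σ⁻¹ ((KFAux.rot m N).symm a)).1 - N := by
            rw [hτ]
            exact KFAux.rot_apply_ge hbN
          have hαv : prependParts n N m α ((((MulAut.conj (KFAux.rot m N)).toEquiv σ)⁻¹) a) = n := by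
            simp only [prependParts]
            rw [dif_pos (by
              rw [hτ1]
              have := (σ⁻¹ ((KFAux.rot m N).symm a)).isLt
              omega)]
          have hβv : prependParts n N m β a = n := by
            simp only [prependParts]
            rw [dif_pos ha]
          have hαz : α (σ⁻¹ ((KFAux.rot m N).symm a)) = 0 :=
            hα0 _ (by omega)
          have hβz : β ((KFAux.rot m N).symm a) = 0 :=
            hβ0 _ (by omega)
          rw [hαv, hβv, hαz, hβz]
          simp only [delta, hτ1, h1]
          have hblt := (σ⁻¹ ((KFAux.rot m N).symm a)).isLt
          push_cast
          omega
        · have h1 : ((KFAux.rot m N).symm a).1 = a.1 - m := KFAux.rot_symm_apply_ge ha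
          have hbN : (σ⁻¹ ((KFAux.rot m N).symm a)).1 < N := by
            refine (hiff ((KFAux.rot m N).symm a)).2 ?_
            have := a.isLt
            omega
          have hτ : (((MulAut.conj (KFAux.rot m N)).toEquiv σ)⁻¹) a = KFAux.rot m N (σ⁻¹ ((KFAux.rot m N).symm a)) := by
            rw [hτinv a]
          have hτ1 : ((((MulAut.conj (KFAux.rot m N)).toEquiv σ)⁻¹) a).1
              = (σ⁻¹ ((KFAux.rot m N).symm a)).1 + m := by
            rw [hτ]
            exact KFAux.rot_apply_lt hbN
          have hαv : prependParts n N m α ((((MulAut.conj (KFAux.rot m N)).toEquiv σ)⁻¹) a)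
              = α (σ⁻¹ ((KFAux.rot m N).symm a)) := by
            simp only [prependParts]
            rw [dif_neg (by rw [hτ1]; omega)]
            congr 1
            exact Fin.ext (by simp only; rw [hτ1]; omega)
          have hβv : prependParts n N m β a = β ((KFAux.rot m N).symm a) := by
            simp only [prependParts]
            rw [dif_neg ha]
            congr 1
            exact Fin.ext (by simp only; rw [h1])
          rw [hαv, hβv]
          simp only [delta, hτ1, h1]
          have := a.isLt
          push_cast
          omega
      rw [hfun]
    · -- non-block case: both sides vanish
      push_neg at hb
      obtain ⟨a₀, ha₀, hna₀⟩ := hb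
      have hgap1 : ∑ a ∈ Finset.univ.filter (fun a : Fin (m + N) => a.1 < N),
          (((α (σ⁻¹ a) : ℤ) + delta (m + N) (σ⁻¹ a)) - ((β a : ℤ) + delta (m + N) a)) < 0 := by
        refine KFAux.gap (fun a => (α a : ℤ) + delta (m + N) a)
          (fun a => (β a : ℤ) + delta (m + N) a) N (m : ℤ) σ⁻¹ ?_ ?_ ?_ ⟨a₀, ha₀, by omega⟩
        · intro a haN
          simp only [delta]
          have : (0 : ℤ) ≤ (α a : ℤ) := Int.natCast_nonneg _
          omega
        · intro a haN
          simp only [delta]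
          rw [hα0 a (by omega)]
          have := a.isLt
          push_cast
          omega
        · exact hvw
      have hzero1 : Pseries (m + N) (fun a => ((α (σ⁻¹ a) : ℤ) + delta (m + N) (σ⁻¹ a))
          - ((β a : ℤ) + delta (m + N) a)) = 0 :=
        KFAux.Pseries_eq_zero hgap1
      -- primed side
      have hex : ∃ b : Fin (m + N), ¬ b.1 < N ∧ (σ⁻¹ b).1 < N := by
        by_contra hc
        have hstep : ∀ a : Fin (m + N), (¬ a.1 < N) → ¬ (σ⁻¹ a).1 < N := by
          intro a ha hcon
          exact hc ⟨a, ha, hcon⟩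
        have hiff2 := KFAux.perm_pred_iff σ⁻¹ (fun a => ¬ a.1 < N) hstep
        have h2 : ¬ a₀.1 < N := (hiff2 a₀).1 (by omega)
        exact h2 ha₀
      obtain ⟨b₀, hb₀, hσb₀⟩ := hex
      have hgap2 : ∑ a ∈ Finset.univ.filter (fun a : Fin (m + N) => a.1 < m),
          (((prependParts n N m α ((((MulAut.conj (KFAux.rot m N)).toEquiv σ)⁻¹) a) : ℤ)
            + delta (m + N) ((((MulAut.conj (KFAux.rot m N)).toEquiv σ)⁻¹) a))
          - ((prependParts n N m β a : ℤ) + delta (m + N) a)) < 0 := by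
        refine KFAux.gap (fun a => (prependParts n N m α a : ℤ) + delta (m + N) a)
          (fun a => (prependParts n N m β a : ℤ) + delta (m + N) a) m ((n : ℤ) + N)
          (((MulAut.conj (KFAux.rot m N)).toEquiv σ)⁻¹) ?_ ?_ ?_ ?_
        · intro a ham
          simp only [prependParts, delta]
          rw [dif_pos ham]
          have := a.isLt
          push_cast
          omega
        · intro a ham
          simp only [prependParts, delta]
          rw [dif_neg ham]
          have h2 := hαle (⟨a.1 - m, by have := a.isLt; omega⟩ : Fin (m + N))
          have := a.isLt
          push_cast
          omega
        · refine Finset.sum_congr rfl (fun a ha => ?_)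
          have ham : a.1 < m := by
            have := Finset.mem_filter.1 ha; exact this.2
          simp only [prependParts]
          rw [dif_pos ham, dif_pos ham]
        · refine ⟨(KFAux.rot m N) b₀, ?_, ?_⟩
          · rw [KFAux.rot_apply_ge hb₀]
            have := b₀.isLt
            omega
          · have hτinv2 : (((MulAut.conj (KFAux.rot m N)).toEquiv σ)⁻¹) ((KFAux.rot m N) b₀) = (KFAux.rot m N) (σ⁻¹ b₀) := by
              have := hτinv ((KFAux.rot m N) b₀)
              rw [this]
              congr 1
              congr 1
              exact (KFAux.rot m N).symm_apply_apply b₀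
            rw [hτinv2, KFAux.rot_apply_lt hσb₀]
            omega
      have hzero2 : Pseries (m + N) (fun a =>
          ((prependParts n N m α ((((MulAut.conj (KFAux.rot m N)).toEquiv σ)⁻¹) a) : ℤ)
            + delta (m + N) ((((MulAut.conj (KFAux.rot m N)).toEquiv σ)⁻¹) a))
          - ((prependParts n N m β a : ℤ) + delta (m + N) a)) = 0 :=
        KFAux.Pseries_eq_zero hgap2
      rw [hzero1, hzero2, smul_zero, smul_zero]
  unfold KostkaFoulkes
  exact Fintype.sum_equiv (MulAut.conj (KFAux.rot m N)).toEquiv _ _ key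
end

section
/- For every n-partition λ of N and every n-composition ν of N, the quotient ring C^λ_ν = P_ν / I^λ_ν is a finite-dimensional ℂ-vector space. -/
open MvPolynomial Finset

set_option synthInstance.maxHeartbeats 1000000
set_option maxHeartbeats 2000000

noncomputable section

variable (n N : ℕ)

/-- The ideal `I^λ_ν` of the ring `P_ν`. -/
def IdealI (lam ν : Fin n → ℕ) : Ideal (Psub n N ν) :=
  Ideal.span {x : Psub n N ν | (x : MvPolynomial (Fin N) ℂ) ∈ Igen n N lam ν}

/-! ### Auxiliary lemmas for the proof -/

section SymLemmas

variable {τ : Type*} [DecidableEq τ]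

lemma esymIn_zero (S : Finset τ) : esymIn S 0 = 1 := by
  simp [esymIn]

lemma esymIn_of_card_lt {S : Finset τ} {l : ℕ} (h : S.card < l) : esymIn S l = 0 := by
  simp [esymIn, Finset.powersetCard_eq_empty.2 h]

lemma hsymIn_zero (S : Finset τ) : hsymIn S 0 = 1 := by
  simp only [hsymIn, Finset.sym_zero, Finset.sum_singleton]
  rfl

lemma hsymIn_empty (m : ℕ) : hsymIn (∅ : Finset τ) (m + 1) = 0 := by
  simp [hsymIn]

lemma esymIn_insert {a : τ} {S : Finset τ} (ha : a ∉ S) (l : ℕ) :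
    esymIn (insert a S) (l + 1) = esymIn S (l + 1) + X (R := ℂ) a * esymIn S l := by
  classical
  have hdisj : Disjoint (S.powersetCard (l + 1)) ((S.powersetCard l).image (insert a)) := by
    rw [Finset.disjoint_right]
    rintro T hT hT2
    obtain ⟨U, hU, rfl⟩ := Finset.mem_image.1 hT
    exact ha ((Finset.mem_powersetCard.1 hT2).1 (Finset.mem_insert_self a U))
  have hinj : ∀ U ∈ S.powersetCard l, ∀ V ∈ S.powersetCard l,
      insert a U = insert a V → U = V := by
    intro U hU V hV h
    have haU : a ∉ U := fun h' => ha ((Finset.mem_powersetCard.1 hU).1 h')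
    have haV : a ∉ V := fun h' => ha ((Finset.mem_powersetCard.1 hV).1 h')
    rw [← Finset.erase_insert haU, h, Finset.erase_insert haV]
  rw [esymIn, esymIn, esymIn, Finset.powersetCard_succ_insert ha,
    Finset.sum_union hdisj, Finset.sum_image hinj, Finset.mul_sum]
  congr 1
  refine Finset.sum_congr rfl fun U hU => ?_
  have haU : a ∉ U := fun h' => ha ((Finset.mem_powersetCard.1 hU).1 h')
  rw [Finset.prod_insert haU]

lemma hsymIn_insert {a : τ} {S : Finset τ} (ha : a ∉ S) (m : ℕ) :
    hsymIn (insert a S) (m + 1) = hsymIn S (m + 1) + X (R := ℂ) a * hsymIn (insert a S) m := by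
  classical
  have hsplit := (Finset.sum_filter_add_sum_filter_not ((insert a S).sym (m + 1))
    (fun t => a ∈ t) (fun t => ((t.1.map X).prod : MvPolynomial τ ℂ))).symm
  have h2 : ((insert a S).sym (m + 1)).filter (fun t => ¬ a ∈ t) = S.sym (m + 1) := by
    ext t
    simp only [Finset.mem_filter, Finset.mem_sym_iff, Finset.mem_insert]
    constructor
    · rintro ⟨h1, h2⟩ b hb
      rcases h1 b hb with rfl | h
      · exact absurd hb h2
      · exact h
    · intro h
      exact ⟨fun b hb => Or.inr (h b hb), fun hat => ha (h a hat)⟩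
  have h1 : ∑ t ∈ ((insert a S).sym (m + 1)).filter (fun t => a ∈ t),
      ((t.1.map X).prod : MvPolynomial τ ℂ) = X a * hsymIn (insert a S) m := by
    rw [hsymIn, Finset.mul_sum]
    refine Finset.sum_bij' (fun t ht => t.erase a (Finset.mem_filter.1 ht).2)
      (fun t _ => a ::ₛ t) ?_ ?_ ?_ ?_ ?_
    · intro t ht
      rw [Finset.mem_sym_iff]
      intro b hb
      have : b ∈ (t : Multiset (τ)) := by
        have := Sym.coe_erase (s := t) (a := a) (Finset.mem_filter.1 ht).2
        rw [← Sym.mem_coe, this] at hb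
        exact Multiset.mem_of_mem_erase hb
      exact Finset.mem_sym_iff.1 (Finset.mem_filter.1 ht).1 b (Sym.mem_coe.1 this)
    · intro t ht
      rw [Finset.mem_filter]
      refine ⟨Finset.mem_sym_iff.2 fun b hb => ?_, Sym.mem_cons_self a t⟩
      rcases Sym.mem_cons.1 hb with rfl | hb
      · exact Finset.mem_insert_self _ _
      · exact Finset.mem_sym_iff.1 ht b hb
    · intro t ht
      exact Sym.cons_erase _
    · intro t ht
      exact Sym.erase_cons_head t a _
    · intro t ht
      conv_lhs => rw [← Sym.cons_erase (Finset.mem_filter.1 ht).2]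
      rw [Sym.val_eq_coe, Sym.coe_cons, Multiset.map_cons, Multiset.prod_cons]
      rfl
  rw [hsymIn, hsplit, h2, h1]
  exact add_comm _ _

lemma key_identity (S : Finset τ) : ∀ r : ℕ, 1 ≤ r →
    ∑ l ∈ Finset.range (r + 1),
      (-1 : MvPolynomial τ ℂ) ^ l * esymIn S l * hsymIn S (r - l) = 0 := by
  classical
  induction S using Finset.induction_on with
  | empty =>
    intro r hr
    rw [Finset.sum_eq_single 0]
    · obtain ⟨rr, rfl⟩ : ∃ rr, r = rr + 1 := ⟨r - 1, by omega⟩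
      simp [esymIn_zero, hsymIn_empty]
    · intro l hl hl0
      obtain ⟨ll, rfl⟩ : ∃ ll, l = ll + 1 := ⟨l - 1, by omega⟩
      rw [esymIn_of_card_lt (by simp), mul_zero, zero_mul]
    · simp
  | @insert a S ha ih =>
    intro r hr
    rw [Finset.sum_range_succ']
    have main : ∀ l ∈ Finset.range r,
        (-1 : MvPolynomial τ ℂ) ^ (l + 1) * esymIn (insert a S) (l + 1) *
            hsymIn (insert a S) (r - (l + 1))
          = (-1 : MvPolynomial τ ℂ) ^ (l + 1) * esymIn S (l + 1) *
              hsymIn (insert a S) (r - (l + 1))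
            - X a * ((-1 : MvPolynomial τ ℂ) ^ l * esymIn S l *
              hsymIn (insert a S) (r - (l + 1))) := by
      intro l _
      rw [esymIn_insert ha]
      ring
    rw [Finset.sum_congr rfl main, Finset.sum_sub_distrib]
    simp only [pow_zero, one_mul, Nat.sub_zero, esymIn_zero]
    have hA : (∑ l ∈ Finset.range r, (-1 : MvPolynomial τ ℂ) ^ (l + 1) * esymIn S (l + 1) *
          hsymIn (insert a S) (r - (l + 1))) + hsymIn (insert a S) r
        = (∑ l ∈ Finset.range r, (-1 : MvPolynomial τ ℂ) ^ l * esymIn S l *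
            hsymIn (insert a S) (r - l))
          + (-1 : MvPolynomial τ ℂ) ^ r * esymIn S r * hsymIn (insert a S) 0 := by
      have h := Finset.sum_range_succ'
        (fun l => (-1 : MvPolynomial τ ℂ) ^ l * esymIn S l * hsymIn (insert a S) (r - l)) r
      rw [Finset.sum_range_succ] at h
      simp only [pow_zero, esymIn_zero, one_mul, Nat.sub_zero, Nat.sub_self] at h
      linear_combination - h
    have hfold : ∀ l ∈ Finset.range r,
        (-1 : MvPolynomial τ ℂ) ^ l * esymIn S l * hsymIn (insert a S) (r - l)
          - X a * ((-1 : MvPolynomial τ ℂ) ^ l * esymIn S l * hsymIn (insert a S) (r - (l + 1)))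
        = (-1 : MvPolynomial τ ℂ) ^ l * esymIn S l * hsymIn S (r - l) := by
      intro l hl
      rw [Finset.mem_range] at hl
      have h1 : r - l = (r - (l + 1)) + 1 := by omega
      rw [h1, hsymIn_insert ha]
      ring
    have hsplitsum := Finset.sum_sub_distrib (s := Finset.range r)
      (f := fun l => (-1 : MvPolynomial τ ℂ) ^ l * esymIn S l * hsymIn (insert a S) (r - l))
      (g := fun l => X a * ((-1 : MvPolynomial τ ℂ) ^ l * esymIn S l *
        hsymIn (insert a S) (r - (l + 1))))
    rw [Finset.sum_congr rfl hfold] at hsplitsum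
    have hmul := Finset.mul_sum (Finset.range r)
      (fun l => (-1 : MvPolynomial τ ℂ) ^ l * esymIn S l * hsymIn (insert a S) (r - (l + 1)))
      (X a)
    have hih := ih r hr
    rw [Finset.sum_range_succ] at hih
    have hz : hsymIn (insert a S) 0 = hsymIn S (r - r) := by
      rw [Nat.sub_self, hsymIn_zero, hsymIn_zero]
    linear_combination hA - hsplitsum + hih + ((-1 : MvPolynomial τ ℂ) ^ r * esymIn S r) * hz

lemma vieta (S : Finset τ) (Y : MvPolynomial τ ℂ) :
    ∏ b ∈ S, (Y - X b)
      = ∑ l ∈ Finset.range (S.card + 1),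
          (-1 : MvPolynomial τ ℂ) ^ l * esymIn S l * Y ^ (S.card - l) := by
  classical
  induction S using Finset.induction_on with
  | empty => simp [esymIn_zero]
  | @insert a S ha ih =>
    rw [Finset.prod_insert ha, ih, Finset.card_insert_of_notMem ha]
    rw [sub_mul, Finset.mul_sum, Finset.mul_sum]
    have hL1 : ∀ l ∈ Finset.range (S.card + 1),
        Y * ((-1 : MvPolynomial τ ℂ) ^ l * esymIn S l * Y ^ (S.card - l))
          = (-1 : MvPolynomial τ ℂ) ^ l * esymIn S l * Y ^ (S.card + 1 - l) := by
      intro l hl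
      rw [Finset.mem_range] at hl
      have : S.card + 1 - l = (S.card - l) + 1 := by omega
      rw [this, pow_succ]
      ring
    rw [Finset.sum_congr rfl hL1]
    have h1 := Finset.sum_range_succ'
      (fun l => (-1 : MvPolynomial τ ℂ) ^ l * esymIn (insert a S) l * Y ^ (S.card + 1 - l))
      (S.card + 1)
    have h2 := Finset.sum_range_succ
      (fun l => (-1 : MvPolynomial τ ℂ) ^ l * esymIn S l * Y ^ (S.card + 1 - l))
      (S.card + 1)
    have hins : ∀ l ∈ Finset.range (S.card + 1),
        (-1 : MvPolynomial τ ℂ) ^ (l + 1) * esymIn (insert a S) (l + 1) *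
            Y ^ (S.card + 1 - (l + 1))
          = (-1 : MvPolynomial τ ℂ) ^ (l + 1) * esymIn S (l + 1) * Y ^ (S.card + 1 - (l + 1))
            - X a * ((-1 : MvPolynomial τ ℂ) ^ l * esymIn S l * Y ^ (S.card - l)) := by
      intro l hl
      rw [Finset.mem_range] at hl
      have : S.card + 1 - (l + 1) = S.card - l := by omega
      rw [esymIn_insert ha, this]
      ring
    rw [Finset.sum_congr rfl hins, Finset.sum_sub_distrib] at h1
    have h3 := Finset.sum_range_succ'
      (fun l => (-1 : MvPolynomial τ ℂ) ^ l * esymIn S l * Y ^ (S.card + 1 - l))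
      (S.card + 1)
    rw [h2] at h3
    have htop : (-1 : MvPolynomial τ ℂ) ^ (S.card + 1) * esymIn S (S.card + 1) *
        Y ^ (S.card + 1 - (S.card + 1)) = 0 := by
      rw [esymIn_of_card_lt (by omega)]
      ring
    have he0 : (-1 : MvPolynomial τ ℂ) ^ 0 * esymIn (insert a S) 0 * Y ^ (S.card + 1 - 0)
        = Y ^ (S.card + 1) := by
      rw [esymIn_zero]; simp
    have he0' : (-1 : MvPolynomial τ ℂ) ^ 0 * esymIn S 0 * Y ^ (S.card + 1 - 0)
        = Y ^ (S.card + 1) := by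
      rw [esymIn_zero]; simp
    rw [he0] at h1
    rw [he0'] at h3
    rw [htop] at h3
    linear_combination - h1 + h3

end SymLemmas

section MainAux

lemma rename_hsymIn_univ {α : Type*} [Fintype α] [DecidableEq α] (e : Equiv.Perm α) (m : ℕ) :
    rename e (hsymIn (Finset.univ : Finset α) m) = hsymIn Finset.univ m := by
  unfold hsymIn
  rw [map_sum]
  refine Finset.sum_bij' (fun t _ => Sym.map e t) (fun t _ => Sym.map e.symm t)
    (fun t _ => Finset.mem_sym_iff.2 fun b _ => Finset.mem_univ b)
    (fun t _ => Finset.mem_sym_iff.2 fun b _ => Finset.mem_univ b)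
    (fun t _ => by simp [Sym.map_map])
    (fun t _ => by simp [Sym.map_map])
    (fun t _ => ?_)
  rw [map_multiset_prod, Multiset.map_map, Sym.val_eq_coe, Sym.val_eq_coe, Sym.coe_map,
    Multiset.map_map]
  simp [Function.comp_def]

lemma hsym_mem_Psub (ν : Fin n → ℕ) (r : ℕ) :
    hsymIn (Finset.univ : Finset (Fin N)) r ∈ Psub n N ν :=
  fun σp _ => rename_hsymIn_univ σp r

lemma kpart_zero (ν : Fin n → ℕ) : kpart n ν 0 = 0 := by
  simp [kpart]

lemma kpart_top (ν : Fin n → ℕ) : kpart n ν n = ∑ a, ν a := by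
  unfold kpart
  rw [Finset.filter_true_of_mem fun i _ => i.2]

lemma exists_block [NeZero N] (hn : 0 < n) (ν : Fin n → ℕ) (hν : (∑ a, ν a) = N) (a : Fin N) :
    ∃ i : Fin n, a ∈ blockOf n N ν i := by
  classical
  have h0 : kpart n ν 0 ≤ (a : ℕ) := by simp [kpart_zero]
  set i0 := Nat.findGreatest (fun t => kpart n ν t ≤ (a : ℕ)) (n - 1) with hi0
  have hle : i0 ≤ n - 1 := Nat.findGreatest_le _
  have hspec : kpart n ν i0 ≤ (a : ℕ) := Nat.findGreatest_spec (P := fun t => kpart n ν t ≤ (a : ℕ)) (Nat.zero_le _) h0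
  have hup : (a : ℕ) < kpart n ν (i0 + 1) := by
    by_cases hc : i0 + 1 ≤ n - 1
    · by_contra hcon
      push_neg at hcon
      have := Nat.le_findGreatest (P := fun t => kpart n ν t ≤ (a : ℕ)) hc hcon
      omega
    · have hn1 : i0 + 1 = n := by omega
      rw [hn1, kpart_top, hν]
      exact a.2
  exact ⟨⟨i0, by omega⟩, Finset.mem_filter.2 ⟨Finset.mem_univ _, hspec, hup⟩⟩

lemma biUnion_blocks [NeZero N] (hn : 0 < n) (ν : Fin n → ℕ) (hν : (∑ a, ν a) = N) :
    Finset.univ.biUnion (fun i => blockOf n N ν i) = Finset.univ := by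
  apply Finset.eq_univ_of_forall
  intro a
  obtain ⟨i, hi⟩ := exists_block n N hn ν hν a
  exact Finset.mem_biUnion.2 ⟨i, Finset.mem_univ _, hi⟩

/-- The set of full complete homogeneous symmetric polynomials `h_1, …, h_N`. -/
def Hgen : Set (MvPolynomial (Fin N) ℂ) :=
  (fun r => hsymIn (Finset.univ : Finset (Fin N)) r) '' Set.Icc 1 N

/-- The subalgebra generated by `h_1, …, h_N`. -/
def Lam : Subalgebra ℂ (MvPolynomial (Fin N) ℂ) :=
  Algebra.adjoin ℂ (Hgen N)

lemma Hgen_finite : (Hgen N).Finite :=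
  (Set.finite_Icc 1 N).image _

lemma Lam_le_Psub (ν : Fin n → ℕ) : Lam N ≤ Psub n N ν := by
  apply Algebra.adjoin_le
  rintro x ⟨r, -, rfl⟩
  exact hsym_mem_Psub n N ν r

lemma esym_mem_Lam (k : ℕ) : esymIn (Finset.univ : Finset (Fin N)) k ∈ Lam N := by
  induction k using Nat.strong_induction_on with
  | _ k ih =>
    rcases Nat.eq_zero_or_pos k with rfl | hk
    · rw [esymIn_zero]; exact one_mem _
    by_cases hNk : N < k
    · rw [esymIn_of_card_lt (by simpa using hNk)]
      exact zero_mem _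
    push_neg at hNk
    have hkey := key_identity (Finset.univ : Finset (Fin N)) k hk
    rw [Finset.sum_range_succ, Nat.sub_self, hsymIn_zero, mul_one] at hkey
    have hsq : (-1 : MvPolynomial (Fin N) ℂ) ^ k * (-1 : MvPolynomial (Fin N) ℂ) ^ k = 1 := by
      rw [← pow_add]
      exact Even.neg_one_pow ⟨k, rfl⟩
    have h2 : esymIn (Finset.univ : Finset (Fin N)) k
        = (-1 : MvPolynomial (Fin N) ℂ) ^ k *
          (- ∑ l ∈ Finset.range k, (-1 : MvPolynomial (Fin N) ℂ) ^ l *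
            esymIn Finset.univ l * hsymIn Finset.univ (k - l)) := by
      linear_combination ((-1 : MvPolynomial (Fin N) ℂ) ^ k) * hkey
        - esymIn (Finset.univ : Finset (Fin N)) k * hsq
    rw [h2]
    refine mul_mem (pow_mem (neg_mem (one_mem _)) k) (neg_mem (Subalgebra.sum_mem _ ?_))
    intro l hl
    rw [Finset.mem_range] at hl
    refine mul_mem (mul_mem (pow_mem (neg_mem (one_mem _)) l) (ih l hl)) ?_
    exact Algebra.subset_adjoin ⟨k - l, ⟨by omega, by omega⟩, rfl⟩

lemma X_isIntegral [NeZero N] (a : Fin N) :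
    IsIntegral (Lam N) (X a : MvPolynomial (Fin N) ℂ) := by
  have hN : 1 ≤ N := Nat.one_le_iff_ne_zero.2 (NeZero.ne N)
  refine ⟨Polynomial.X ^ N + ∑ l ∈ Finset.Icc 1 N,
    Polynomial.C (⟨(-1 : MvPolynomial (Fin N) ℂ) ^ l * esymIn Finset.univ l,
      mul_mem (pow_mem (neg_mem (one_mem _)) l) (esym_mem_Lam N l)⟩ : Lam N) *
      Polynomial.X ^ (N - l), ?_, ?_⟩
  · apply Polynomial.monic_X_pow_add
    apply lt_of_le_of_lt (Polynomial.degree_sum_le _ _)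
    rw [Finset.sup_lt_iff (by exact_mod_cast WithBot.bot_lt_coe N)]
    intro l hl
    rw [Finset.mem_Icc] at hl
    refine lt_of_le_of_lt (Polynomial.degree_C_mul_X_pow_le _ _) ?_
    exact_mod_cast Nat.sub_lt_of_pos_le hl.1 hl.2
  · rw [← Polynomial.aeval_def, map_add, map_pow, Polynomial.aeval_X, map_sum]
    have hterm : ∀ l ∈ Finset.Icc 1 N,
        Polynomial.aeval (X a : MvPolynomial (Fin N) ℂ)
          (Polynomial.C (⟨(-1 : MvPolynomial (Fin N) ℂ) ^ l * esymIn Finset.univ l,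
            mul_mem (pow_mem (neg_mem (one_mem _)) l) (esym_mem_Lam N l)⟩ : Lam N) *
            Polynomial.X ^ (N - l))
        = (-1 : MvPolynomial (Fin N) ℂ) ^ l * esymIn Finset.univ l *
            (X a : MvPolynomial (Fin N) ℂ) ^ (N - l) := by
      intro l _
      rw [map_mul, Polynomial.aeval_C, map_pow, Polynomial.aeval_X]
      rfl
    rw [Finset.sum_congr rfl hterm]
    have hv := vieta (Finset.univ : Finset (Fin N)) (X a : MvPolynomial (Fin N) ℂ)
    have hzero : ∏ b ∈ (Finset.univ : Finset (Fin N)), ((X a : MvPolynomial (Fin N) ℂ) - X b) = 0 :=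
      Finset.prod_eq_zero (Finset.mem_univ a) (sub_self _)
    rw [hzero] at hv
    have hcard : (Finset.univ : Finset (Fin N)).card = N := by simp
    rw [hcard] at hv
    have hrange : Finset.range (N + 1) = insert 0 (Finset.Icc 1 N) := by
      ext x
      simp only [Finset.mem_range, Finset.mem_insert, Finset.mem_Icc]
      omega
    rw [hrange, Finset.sum_insert (by simp)] at hv
    simp only [pow_zero, esymIn_zero, one_mul, Nat.sub_zero] at hv
    linear_combination - hv

lemma finite_over_Lam [NeZero N] : Module.Finite (Lam N) (MvPolynomial (Fin N) ℂ) := by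
  have htop : Algebra.adjoin (Lam N)
      (Set.range (X : Fin N → MvPolynomial (Fin N) ℂ)) = ⊤ := by
    rw [eq_top_iff]
    intro p _
    have hp : p ∈ Algebra.adjoin ℂ (Set.range (X : Fin N → MvPolynomial (Fin N) ℂ)) := by
      rw [MvPolynomial.adjoin_range_X]
      trivial
    have hle : Algebra.adjoin ℂ (Set.range (X : Fin N → MvPolynomial (Fin N) ℂ))
        ≤ (Algebra.adjoin (Lam N) (Set.range (X : Fin N → MvPolynomial (Fin N) ℂ))).restrictScalars ℂ :=
      Algebra.adjoin_le fun x hx => Algebra.subset_adjoin hx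
    exact hle hp
  have hfg := fg_adjoin_of_finite (R := Lam N)
    (Set.finite_range (X : Fin N → MvPolynomial (Fin N) ℂ))
    (fun x hx => by obtain ⟨b, rfl⟩ := hx; exact X_isIntegral N b)
  rw [htop] at hfg
  exact ⟨by rwa [Algebra.top_toSubmodule] at hfg⟩

lemma lam_noetherian : IsNoetherianRing (Lam N) := by
  have hft : Algebra.FiniteType ℂ (Lam N) := by
    rw [← Subalgebra.fg_iff_finiteType]
    exact Subalgebra.fg_def.2 ⟨Hgen N, Hgen_finite N, rfl⟩
  exact Algebra.FiniteType.isNoetherianRing ℂ (Lam N)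

/-- `P_ν` as a module over `Λ = ℂ[h_1,…,h_N]`. -/
def Mnu (ν : Fin n → ℕ) : Submodule (Lam N) (MvPolynomial (Fin N) ℂ) where
  carrier := Psub n N ν
  add_mem' := fun h1 h2 => add_mem h1 h2
  zero_mem' := zero_mem _
  smul_mem' := fun c p hp => by
    rw [Algebra.smul_def]
    exact mul_mem (Lam_le_Psub n N ν c.2) hp

lemma Mnu_fg (ν : Fin n → ℕ) [NeZero N] : (Mnu n N ν).FG := by
  haveI := lam_noetherian N
  haveI := finite_over_Lam N
  haveI : IsNoetherian (Lam N) (MvPolynomial (Fin N) ℂ) :=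
    isNoetherian_of_isNoetherianRing_of_finite _ _
  exact IsNoetherian.noetherian _

end MainAux

lemma decomp [NeZero N] (hn : 2 ≤ n) (lam ν : Fin n → ℕ)
    (hlamsum : (∑ a, lam a) = N) (hν : (∑ a, ν a) = N) :
    ∀ x ∈ Lam N, ∃ (hx' : x ∈ Psub n N ν) (c : ℂ),
      (⟨x, hx'⟩ : Psub n N ν) - algebraMap ℂ (Psub n N ν) c ∈ IdealI n N lam ν := by
  intro x hx
  induction hx using Algebra.adjoin_induction with
  | mem x hxs =>
    refine ⟨Lam_le_Psub n N ν (Algebra.subset_adjoin hxs), 0, ?_⟩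
    rw [map_zero, sub_zero]
    apply Ideal.subset_span
    show _ ∈ Igen n N lam ν
    obtain ⟨r, hr, rfl⟩ := hxs
    haveI : Nonempty (Fin n) := ⟨⟨0, by omega⟩⟩
    refine ⟨Finset.univ, r, Finset.univ_nonempty, ?_, ?_⟩
    · have h1 : (Finset.univ.filter fun k : Fin n =>
          (k : ℕ) < (Finset.univ : Finset (Fin n)).card) = Finset.univ := by
        apply Finset.filter_true_of_mem
        intro i _
        simpa using i.2
      rw [h1, hlamsum, hν]
      have := hr.1
      omega
    · rw [biUnion_blocks n N (by omega) ν hν]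
  | algebraMap c =>
    refine ⟨Subalgebra.algebraMap_mem _ c, c, ?_⟩
    have h0 : (⟨algebraMap ℂ (MvPolynomial (Fin N) ℂ) c, Subalgebra.algebraMap_mem _ c⟩ :
        Psub n N ν) = algebraMap ℂ (Psub n N ν) c := rfl
    rw [h0, sub_self]
    exact Ideal.zero_mem _
  | add x y hx hy ihx ihy =>
    obtain ⟨hx', cx, hcx⟩ := ihx
    obtain ⟨hy', cy, hcy⟩ := ihy
    refine ⟨add_mem hx' hy', cx + cy, ?_⟩
    have h0 : (⟨x + y, add_mem hx' hy'⟩ : Psub n N ν) - algebraMap ℂ (Psub n N ν) (cx + cy)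
        = ((⟨x, hx'⟩ : Psub n N ν) - algebraMap ℂ (Psub n N ν) cx)
          + ((⟨y, hy'⟩ : Psub n N ν) - algebraMap ℂ (Psub n N ν) cy) := by
      apply Subtype.ext
      push_cast
      ring
    rw [h0]
    exact Ideal.add_mem _ hcx hcy
  | mul x y hx hy ihx ihy =>
    obtain ⟨hx', cx, hcx⟩ := ihx
    obtain ⟨hy', cy, hcy⟩ := ihy
    refine ⟨mul_mem hx' hy', cx * cy, ?_⟩
    have h0 : (⟨x * y, mul_mem hx' hy'⟩ : Psub n N ν) - algebraMap ℂ (Psub n N ν) (cx * cy)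
        = (⟨x, hx'⟩ : Psub n N ν) * ((⟨y, hy'⟩ : Psub n N ν) - algebraMap ℂ (Psub n N ν) cy)
          + algebraMap ℂ (Psub n N ν) cy *
            ((⟨x, hx'⟩ : Psub n N ν) - algebraMap ℂ (Psub n N ν) cx) := by
      apply Subtype.ext
      push_cast
      ring
    rw [h0]
    exact Ideal.add_mem _ (Ideal.mul_mem_left _ _ hcy) (Ideal.mul_mem_left _ _ hcx)


/-- **The ring `C^λ_ν = P_ν / I^λ_ν` is a finite-dimensional `ℂ`-vector space**, for every
`n`-partition `λ` of `N` and every `n`-composition `ν` of `N`. -/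
theorem C_finiteDimensional [NeZero N] (hn : 2 ≤ n) (hN : 1 ≤ N)
    (lam : Fin n → ℕ) (hlam : ∀ a b : Fin n, a ≤ b → lam b ≤ lam a)
    (hlamsum : (∑ a, lam a) = N)
    (ν : Fin n → ℕ) (hν : (∑ a, ν a) = N) :
    FiniteDimensional ℂ ((Psub n N ν) ⧸ IdealI n N lam ν) := by
  classical
  obtain ⟨g, hg⟩ := Mnu_fg n N ν
  have hgsub : ∀ x ∈ g, x ∈ Psub n N ν := by
    intro x hx
    have hxm : x ∈ Mnu n N ν := by
      rw [← hg]
      exact Submodule.subset_span hx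
    exact hxm
  refine ⟨⟨g.attach.image (fun x =>
    Ideal.Quotient.mk (IdealI n N lam ν) ⟨x.1, hgsub x.1 x.2⟩), ?_⟩⟩
  rw [eq_top_iff]
  rintro q -
  obtain ⟨p, rfl⟩ := Ideal.Quotient.mk_surjective q
  have hp : (p : MvPolynomial (Fin N) ℂ)
      ∈ Submodule.span (Lam N) (g : Set (MvPolynomial (Fin N) ℂ)) := by
    rw [hg]
    exact p.2
  obtain ⟨f, -, hf⟩ := Submodule.mem_span_finset.1 hp
  have hrep : p = ∑ x ∈ g.attach,
      (⟨(f x.1 : MvPolynomial (Fin N) ℂ), Lam_le_Psub n N ν (f x.1).2⟩ : Psub n N ν)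
        * ⟨x.1, hgsub x.1 x.2⟩ := by
    apply Subtype.ext
    rw [AddSubmonoidClass.coe_finset_sum, ← hf, ← Finset.sum_attach g (fun x => f x • x)]
    refine Finset.sum_congr rfl fun x _ => ?_
    rw [Algebra.smul_def]
    rfl
  rw [hrep, map_sum]
  apply Submodule.sum_mem
  intro x _
  rw [map_mul]
  obtain ⟨hx', c, hc⟩ := decomp n N hn lam ν hlamsum hν
    ((f x.1 : MvPolynomial (Fin N) ℂ)) (f x.1).2
  have hmkeq : Ideal.Quotient.mk (IdealI n N lam ν)
      (⟨(f x.1 : MvPolynomial (Fin N) ℂ), Lam_le_Psub n N ν (f x.1).2⟩ : Psub n N ν)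
      = Ideal.Quotient.mk (IdealI n N lam ν) (algebraMap ℂ (Psub n N ν) c) := by
    rw [Ideal.Quotient.mk_eq_mk_iff_sub_mem]
    exact hc
  rw [hmkeq]
  have halg : Ideal.Quotient.mk (IdealI n N lam ν) (algebraMap ℂ (Psub n N ν) c)
      * Ideal.Quotient.mk (IdealI n N lam ν) (⟨x.1, hgsub x.1 x.2⟩ : Psub n N ν)
      = c • Ideal.Quotient.mk (IdealI n N lam ν) (⟨x.1, hgsub x.1 x.2⟩ : Psub n N ν) := by
    rw [← map_mul, ← Algebra.smul_def]
    exact Submodule.Quotient.mk_smul _ c _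
  rw [halg]
  refine Submodule.smul_mem _ _ (Submodule.subset_span ?_)
  exact Finset.mem_coe.2 (Finset.mem_image.2 ⟨x, Finset.mem_attach _ _, rfl⟩)


end
end
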